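/- arXiv:1803.02572 — 7 statements merged into one kernel-verified Lean document; each statement's English description precedes it below -/
import Mathlib

section
/- For every unit vector n = (n₁,n₂,n₃) ∈ ℝ³ (n₁²+n₂²+n₃² = 1) and every θ ∈ ℝ, let U = exp(−iθ(n₁J_x + n₂J_y + n₃J_z)) (matrix exponential). Then U is unitary and for every X ∈ M_d(ℂ) one has Φ(U X U†) = U Φ(X) U†, i.e. the Landau–Streater channel is covariant with respect to the unitary representation of SU(2) for every spin j. -/
open Matrix Complex

noncomputable section

/-- Spin-z matrix for spin j = n/2 in dimension d = n+1: diagonal with entries j - k. -/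
def Jz (n : ℕ) : Matrix (Fin (n+1)) (Fin (n+1)) ℂ :=
  Matrix.diagonal fun k => (n : ℂ) / 2 - (k : ℕ)

/-- Raising operator `J₊`, with entries `(J₊)_{k,k+1} = √((k+1)(n-k))`. -/
def Jp (n : ℕ) : Matrix (Fin (n+1)) (Fin (n+1)) ℂ :=
  Matrix.of fun a b =>
    if (a : ℕ) + 1 = (b : ℕ) then ((Real.sqrt (((a : ℕ) + 1) * (n - (a : ℕ))) : ℝ) : ℂ) else 0

/-- Lowering operator `J₋ = (J₊)†`. -/
def Jm (n : ℕ) : Matrix (Fin (n+1)) (Fin (n+1)) ℂ := (Jp n)ᴴ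

/-- `J_x = (J₊ + J₋)/2`. -/
def Jx (n : ℕ) : Matrix (Fin (n+1)) (Fin (n+1)) ℂ := (1/2 : ℂ) • (Jp n + Jm n)

/-- `J_y = (J₊ - J₋)/(2i)`. -/
def Jy (n : ℕ) : Matrix (Fin (n+1)) (Fin (n+1)) ℂ := (1/(2 * Complex.I)) • (Jp n - Jm n)

/-- The Landau–Streater map `Φ(X) = (JₓXJₓ + J_yXJ_y + J_zXJ_z)/(j(j+1))`. -/
def LS (n : ℕ) (X : Matrix (Fin (n+1)) (Fin (n+1)) ℂ) : Matrix (Fin (n+1)) (Fin (n+1)) ℂ :=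
  (((n : ℂ)/2) * ((n : ℂ)/2 + 1))⁻¹ • (Jx n * X * Jx n + Jy n * X * Jy n + Jz n * X * Jz n)

end

/-! ### Auxiliary material for the covariance proof -/

namespace LSCov

open NormedSpace

/-! #### Abstract Banach-algebra lemma: conjugation by `exp` commutes with maps
commuting with the adjoint action. -/

section Abstract
variable {𝔸 : Type*} [NormedRing 𝔸] [NormedAlgebra ℂ 𝔸] [CompleteSpace 𝔸]

/-- Left multiplication as an algebra hom into continuous linear endomorphisms. -/
noncomputable def lmulAH : 𝔸 →ₐ[ℂ] (𝔸 →L[ℂ] 𝔸) :=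
  AlgHom.ofLinearMap (ContinuousLinearMap.mul ℂ 𝔸).toLinearMap
    (by ext x; simp) (fun a b => by ext x; simp [mul_assoc])

/-- Right multiplication (from the opposite algebra). -/
noncomputable def rmulAH : 𝔸ᵐᵒᵖ →ₐ[ℂ] (𝔸 →L[ℂ] 𝔸) :=
  AlgHom.ofLinearMap
    (((ContinuousLinearMap.mul ℂ 𝔸).flip.toLinearMap).comp
      (MulOpposite.opLinearEquiv ℂ).symm.toLinearMap)
    (by ext x; simp) (fun a b => by ext x; simp [mul_assoc])

@[simp] lemma lmulAH_apply (a x : 𝔸) : lmulAH a x = a * x := rfl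
@[simp] lemma rmulAH_apply (a : 𝔸ᵐᵒᵖ) (x : 𝔸) : rmulAH a x = x * a.unop := rfl

lemma conj_exp_comm (B : 𝔸) (f : 𝔸 →L[ℂ] 𝔸)
    (hf : ∀ X, f (B * X - X * B) = B * f X - f X * B)
    (V W : 𝔸) (hV : V = exp B) (hW : W = exp (-B)) (X : 𝔸) :
    f (V * X * W) = V * f X * W := by
  subst hV; subst hW
  set L : 𝔸 →L[ℂ] 𝔸 := lmulAH B
  set R : 𝔸 →L[ℂ] 𝔸 := rmulAH (MulOpposite.op (-B))
  have hC : Commute L R := by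
    apply ContinuousLinearMap.ext; intro x
    show L (R x) = R (L x)
    simp [L, R, mul_assoc]
  have hcont : Continuous (lmulAH (𝔸 := 𝔸)) := (ContinuousLinearMap.mul ℂ 𝔸).continuous
  have hcont' : Continuous (rmulAH (𝔸 := 𝔸)) := by
    have : Continuous ((ContinuousLinearMap.mul ℂ 𝔸).flip) :=
      (ContinuousLinearMap.mul ℂ 𝔸).flip.continuous
    exact this.comp MulOpposite.continuous_unop
  have hexp : exp (L + R) = lmulAH (exp B) * rmulAH (MulOpposite.op (exp (-B))) := by
    letI : NormedAlgebra ℚ 𝔸 := .restrictScalars ℚ ℂ 𝔸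
    letI : NormedAlgebra ℚ (𝔸 →L[ℂ] 𝔸) := .restrictScalars ℚ ℂ (𝔸 →L[ℂ] 𝔸)
    rw [NormedSpace.exp_add_of_commute hC]
    rw [← map_exp (lmulAH (𝔸 := 𝔸)) hcont, ← map_exp (rmulAH (𝔸 := 𝔸)) hcont', exp_op]
  have hFc : Commute f (L + R) := by
    apply ContinuousLinearMap.ext; intro x
    show f ((L + R) x) = (L + R) (f x)
    have h1 : (L + R) x = B * x - x * B := by
      simp [L, R, mul_neg, sub_eq_add_neg]
    have h2 : (L + R) (f x) = B * f x - f x * B := by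
      simp [L, R, mul_neg, sub_eq_add_neg]
    rw [h1, h2, hf]
  have hFexp : Commute f (exp (L + R)) := hFc.exp_right
  have happ : ∀ Y : 𝔸, exp (L + R) Y = exp B * Y * exp (-B) := by
    intro Y
    rw [hexp]; show lmulAH (exp B) (rmulAH (MulOpposite.op (exp (-B))) Y) = _
    simp [mul_assoc]
  calc f (exp B * X * exp (-B)) = f (exp (L + R) X) := by rw [happ]
    _ = (f * exp (L + R)) X := rfl
    _ = (exp (L + R) * f) X := by rw [hFexp]
    _ = exp (L + R) (f X) := rfl
    _ = exp B * f X * exp (-B) := happ (f X)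

end Abstract

/-! #### Entrywise commutation relations -/

lemma Jm_apply (n : ℕ) (a b : Fin (n+1)) :
    Jm n a b = if (b : ℕ) + 1 = (a : ℕ)
      then ((Real.sqrt (((b : ℕ) + 1) * (n - (b : ℕ))) : ℝ) : ℂ) else 0 := by
  simp only [Jm, Jp, Matrix.conjTranspose_apply, Matrix.of_apply, apply_ite, map_zero,
    Complex.star_def, Complex.conj_ofReal]
  split <;> simp_all

lemma sq_eq (n : ℕ) (a : Fin (n+1)) :
    ((Real.sqrt (((a : ℕ) + 1) * (n - (a : ℕ))) : ℝ) : ℂ)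
      * ((Real.sqrt (((a : ℕ) + 1) * (n - (a : ℕ))) : ℝ) : ℂ)
      = (((a:ℕ):ℂ) + 1) * ((n:ℂ) - (a:ℕ)) := by
  have ha : ((a:ℕ):ℝ) ≤ (n:ℝ) := by exact_mod_cast Nat.le_of_lt_succ a.isLt
  rw [← Complex.ofReal_mul, Real.mul_self_sqrt (by nlinarith)]
  push_cast; ring

lemma sum_shift (n : ℕ) (a : Fin (n+1)) (f : Fin (n+1) → ℂ) :
    (∑ c : Fin (n+1), if (a:ℕ) + 1 = (c:ℕ) then f c else 0)
      = if h : (a:ℕ) < n then f ⟨(a:ℕ)+1, by omega⟩ else 0 := by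
  split
  · rename_i h
    rw [Finset.sum_eq_single (⟨(a:ℕ)+1, by omega⟩ : Fin (n+1))]
    · rw [if_pos rfl]
    · intro c _ hc; rw [if_neg]; intro he; exact hc (by apply Fin.ext; simp [← he])
    · simp
  · rename_i h
    apply Finset.sum_eq_zero; intro c _; rw [if_neg]; have := c.isLt; omega

lemma sum_shift' (n : ℕ) (a : Fin (n+1)) (f : Fin (n+1) → ℂ) :
    (∑ c : Fin (n+1), if (c:ℕ) + 1 = (a:ℕ) then f c else 0)
      = if h : 1 ≤ (a:ℕ) then f ⟨(a:ℕ)-1, by omega⟩ else 0 := by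
  split
  · rename_i h
    rw [Finset.sum_eq_single (⟨(a:ℕ)-1, by omega⟩ : Fin (n+1))]
    · rw [if_pos (by simp; omega)]
    · intro c _ hc; rw [if_neg]; intro he
      exact hc (by apply Fin.ext; show (c:ℕ) = (a:ℕ)-1; omega)
    · simp
  · rename_i h
    apply Finset.sum_eq_zero; intro c _; rw [if_neg]; omega

lemma comm_zp (n : ℕ) : Jz n * Jp n - Jp n * Jz n = Jp n := by
  ext a b
  simp only [Jz, Jp, Matrix.sub_apply, Matrix.diagonal_mul, Matrix.mul_diagonal, Matrix.of_apply]
  split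
  · rename_i h
    have : ((b:ℕ):ℂ) = ((a:ℕ):ℂ) + 1 := by exact_mod_cast congrArg (Nat.cast : ℕ → ℂ) h.symm
    rw [this]; ring
  · simp

lemma comm_zm (n : ℕ) : Jz n * Jm n - Jm n * Jz n = -(Jm n) := by
  ext a b
  simp only [Jz, Jm_apply, Matrix.sub_apply, Matrix.diagonal_mul, Matrix.mul_diagonal,
    Matrix.neg_apply]
  split
  · rename_i h
    rw [show ((a:ℕ):ℂ) = ((b:ℕ):ℂ) + 1 from by exact_mod_cast h.symm]
    ring
  · simp

lemma comm_pm (n : ℕ) : Jp n * Jm n - Jm n * Jp n = (2:ℂ) • Jz n := by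
  ext a b
  rw [Matrix.sub_apply, Matrix.mul_apply, Matrix.mul_apply]
  simp only [Jp, Jm_apply, Matrix.of_apply, ite_mul, zero_mul, mul_ite, mul_zero]
  rw [sum_shift, sum_shift']
  simp only [Matrix.smul_apply, Jz, Matrix.diagonal_apply, smul_eq_mul]
  by_cases hab : a = b
  · subst hab
    rw [if_pos rfl]
    by_cases h1 : (a:ℕ) < n <;> by_cases h2 : 1 ≤ (a:ℕ)
    · rw [dif_pos h1, dif_pos h2, if_pos rfl,
        if_pos (show ((a:ℕ)-1)+1 = (a:ℕ) from by omega)]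
      have e1 := sq_eq n a
      have e2 := sq_eq n ⟨(a:ℕ)-1, by omega⟩
      rw [e1, e2]
      have : (((⟨(a:ℕ)-1, by omega⟩ : Fin (n+1)):ℕ):ℂ) = ((a:ℕ):ℂ) - 1 := by
        simp; push_cast [h2]; ring
      rw [this]; ring
    · have h2' : (a:ℕ) = 0 := by omega
      rw [dif_pos h1, dif_neg h2, if_pos rfl]
      have e1 := sq_eq n a
      rw [e1]
      rw [show ((a:ℕ):ℂ) = 0 from by exact_mod_cast h2']; ring
    · have h1' : (a:ℕ) = n := by have := a.isLt; omega
      rw [dif_neg h1, dif_pos h2, if_pos (show ((a:ℕ)-1)+1 = (a:ℕ) from by omega)]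
      have e2 := sq_eq n ⟨(a:ℕ)-1, by omega⟩
      rw [e2]
      have : (((⟨(a:ℕ)-1, by omega⟩ : Fin (n+1)):ℕ):ℂ) = ((a:ℕ):ℂ) - 1 := by
        simp; push_cast [h2]; ring
      rw [this, show ((a:ℕ):ℂ) = (n:ℂ) from by exact_mod_cast h1']
      ring
    · have hna : n = 0 ∧ (a:ℕ) = 0 := by have := a.isLt; omega
      rw [dif_neg h1, dif_neg h2]
      rw [show ((a:ℕ):ℂ) = 0 from by exact_mod_cast hna.2,
        show ((n:ℕ):ℂ) = 0 from by exact_mod_cast hna.1]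
      ring
  · rw [if_neg hab]
    have hab' : (a:ℕ) ≠ (b:ℕ) := fun h => hab (Fin.ext h)
    by_cases h1 : (b:ℕ) < n <;> by_cases h2 : 1 ≤ (b:ℕ)
    · rw [dif_pos h1, dif_pos h2, if_neg (show ¬((a:ℕ)+1 = (b:ℕ)+1) from by omega),
        if_neg (show ¬((b:ℕ)-1+1 = (a:ℕ)) from by omega)]; ring
    · rw [dif_pos h1, dif_neg h2, if_neg (show ¬((a:ℕ)+1 = (b:ℕ)+1) from by omega)]; ring
    · rw [dif_neg h1, dif_pos h2, if_neg (show ¬((b:ℕ)-1+1 = (a:ℕ)) from by omega)]; ring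
    · rw [dif_neg h1, dif_neg h2]; ring

/-! #### Algebraic commutation relations among `Jx, Jy, Jz` -/

lemma comm_zx (n : ℕ) : Jz n * Jx n - Jx n * Jz n = Complex.I • Jy n := by
  have f1 : Jz n * Jp n = Jp n + Jp n * Jz n := eq_add_of_sub_eq (comm_zp n)
  have f2 : Jz n * Jm n = -(Jm n) + Jm n * Jz n := eq_add_of_sub_eq (comm_zm n)
  simp only [Jx, Jy, Matrix.mul_smul, Matrix.smul_mul, Matrix.mul_add, Matrix.add_mul,
    Matrix.mul_sub, Matrix.sub_mul, f1, f2]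
  match_scalars <;> (try field_simp) <;> ring_nf <;> (try simp [Complex.I_sq]) <;> try ring

lemma comm_yz (n : ℕ) : Jy n * Jz n - Jz n * Jy n = Complex.I • Jx n := by
  have f1 : Jz n * Jp n = Jp n + Jp n * Jz n := eq_add_of_sub_eq (comm_zp n)
  have f2 : Jz n * Jm n = -(Jm n) + Jm n * Jz n := eq_add_of_sub_eq (comm_zm n)
  simp only [Jx, Jy, Matrix.mul_smul, Matrix.smul_mul, Matrix.mul_add, Matrix.add_mul,
    Matrix.mul_sub, Matrix.sub_mul, f1, f2]
  match_scalars <;> (try field_simp) <;> ring_nf <;> (try simp [Complex.I_sq]) <;> try ring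

lemma comm_xy (n : ℕ) : Jx n * Jy n - Jy n * Jx n = Complex.I • Jz n := by
  have f3 : Jp n * Jm n = (2:ℂ) • Jz n + Jm n * Jp n := eq_add_of_sub_eq (comm_pm n)
  simp only [Jx, Jy, Matrix.mul_smul, Matrix.smul_mul, Matrix.mul_add, Matrix.add_mul,
    Matrix.mul_sub, Matrix.sub_mul, f3]
  match_scalars <;> (try field_simp) <;> ring_nf <;> (try simp [Complex.I_sq]) <;> try ring

/-! #### The generator-commutation identity for the quadratic map -/

lemma gen_comm {d : ℕ} (Z P Q X : Matrix (Fin d) (Fin d) ℂ)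
    (h1 : Z*P - P*Z = Complex.I • Q) (h2 : Z*Q - Q*Z = -(Complex.I • P)) :
    P*(Z*X - X*Z)*P + Q*(Z*X - X*Z)*Q + Z*(Z*X - X*Z)*Z
      = Z*(P*X*P + Q*X*Q + Z*X*Z) - (P*X*P + Q*X*Q + Z*X*Z)*Z := by
  have h1' : P*Z - Z*P = -(Complex.I • Q) := by rw [← neg_sub, h1]
  have h2' : Q*Z - Z*Q = Complex.I • P := by rw [← neg_sub, h2, neg_neg]
  have expand :
      (P*(Z*X - X*Z)*P + Q*(Z*X - X*Z)*Q + Z*(Z*X - X*Z)*Z)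
        - (Z*(P*X*P + Q*X*Q + Z*X*Z) - (P*X*P + Q*X*Q + Z*X*Z)*Z)
      = ((P*Z - Z*P)*X)*P + (P*X)*(P*Z - Z*P)
        + ((Q*Z - Z*Q)*X)*Q + (Q*X)*(Q*Z - Z*Q) := by
    noncomm_ring
  have hzero :
      ((P*Z - Z*P)*X)*P + (P*X)*(P*Z - Z*P)
        + ((Q*Z - Z*Q)*X)*Q + (Q*X)*(Q*Z - Z*Q) = 0 := by
    rw [h1', h2']
    simp only [Matrix.neg_mul, Matrix.mul_neg, smul_mul_assoc, mul_smul_comm]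
    abel
  exact sub_eq_zero.mp (expand.trans hzero)

/-- The quadratic form commutes with each `ad J_a`. Stated for a generic `Z` in the trio. -/
lemma Fcomm_z (n : ℕ) (X : Matrix (Fin (n+1)) (Fin (n+1)) ℂ) :
    Jx n*(Jz n*X - X*Jz n)*Jx n + Jy n*(Jz n*X - X*Jz n)*Jy n + Jz n*(Jz n*X - X*Jz n)*Jz n
      = Jz n*(Jx n*X*Jx n + Jy n*X*Jy n + Jz n*X*Jz n)
        - (Jx n*X*Jx n + Jy n*X*Jy n + Jz n*X*Jz n)*Jz n := by
  have h2 : Jz n * Jy n - Jy n * Jz n = -(Complex.I • Jx n) := by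
    rw [← neg_sub, comm_yz]
  have h := gen_comm (Jz n) (Jx n) (Jy n) X (comm_zx n) h2
  exact h

lemma Fcomm_x (n : ℕ) (X : Matrix (Fin (n+1)) (Fin (n+1)) ℂ) :
    Jx n*(Jx n*X - X*Jx n)*Jx n + Jy n*(Jx n*X - X*Jx n)*Jy n + Jz n*(Jx n*X - X*Jx n)*Jz n
      = Jx n*(Jx n*X*Jx n + Jy n*X*Jy n + Jz n*X*Jz n)
        - (Jx n*X*Jx n + Jy n*X*Jy n + Jz n*X*Jz n)*Jx n := by
  have h2 : Jx n * Jz n - Jz n * Jx n = -(Complex.I • Jy n) := by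
    rw [← neg_sub, comm_zx]
  have h := gen_comm (Jx n) (Jy n) (Jz n) X (comm_xy n) h2
  rw [show Jy n*X*Jy n + Jz n*X*Jz n + Jx n*X*Jx n
      = Jx n*X*Jx n + Jy n*X*Jy n + Jz n*X*Jz n from by abel] at h
  rw [← h]; abel

lemma Fcomm_y (n : ℕ) (X : Matrix (Fin (n+1)) (Fin (n+1)) ℂ) :
    Jx n*(Jy n*X - X*Jy n)*Jx n + Jy n*(Jy n*X - X*Jy n)*Jy n + Jz n*(Jy n*X - X*Jy n)*Jz n
      = Jy n*(Jx n*X*Jx n + Jy n*X*Jy n + Jz n*X*Jz n)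
        - (Jx n*X*Jx n + Jy n*X*Jy n + Jz n*X*Jz n)*Jy n := by
  have h2 : Jy n * Jx n - Jx n * Jy n = -(Complex.I • Jz n) := by
    rw [← neg_sub, comm_xy]
  have h := gen_comm (Jy n) (Jz n) (Jx n) X (comm_yz n) h2
  rw [show Jz n*X*Jz n + Jx n*X*Jx n + Jy n*X*Jy n
      = Jx n*X*Jx n + Jy n*X*Jy n + Jz n*X*Jz n from by abel] at h
  rw [← h]; abel

/-! #### Hermiticity -/

lemma Jz_herm (n : ℕ) : (Jz n)ᴴ = Jz n := by
  ext a b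
  rw [Matrix.conjTranspose_apply]
  simp only [Jz, Matrix.diagonal_apply]
  by_cases h : b = a
  · subst h
    simp only [if_pos rfl]
    simp [Complex.star_def, map_sub, map_div₀, Complex.conj_natCast, Complex.conj_ofNat]
  · rw [if_neg h, if_neg (fun he => h he.symm), star_zero]

lemma Jx_herm (n : ℕ) : (Jx n)ᴴ = Jx n := by
  rw [Jx, Matrix.conjTranspose_smul, Matrix.conjTranspose_add, Jm,
    Matrix.conjTranspose_conjTranspose]
  rw [show (Jp n)ᴴ + Jp n = Jp n + (Jp n)ᴴ from by abel]
  congr 1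
  simp [Complex.star_def, map_div₀, Complex.conj_ofNat]

lemma Jy_herm (n : ℕ) : (Jy n)ᴴ = Jy n := by
  rw [Jy, Matrix.conjTranspose_smul, Matrix.conjTranspose_sub, Jm,
    Matrix.conjTranspose_conjTranspose]
  have hs : (starRingEnd ℂ) (1/(2*Complex.I)) = -(1/(2*Complex.I)) := by
    rw [map_div₀, _root_.map_mul, Complex.conj_I, _root_.map_one]
    rw [show (starRingEnd ℂ) 2 = 2 from by simp only [Complex.conj_ofNat]]
    ring
  rw [show (star (1/(2*Complex.I) : ℂ)) = (starRingEnd ℂ) (1/(2*Complex.I)) from rfl, hs]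
  match_scalars <;> ring

end LSCov

/-- `SU(2)` covariance of the Landau–Streater channel: for every unit vector
`(n₁,n₂,n₃) ∈ ℝ³` and every `θ ∈ ℝ`, the matrix `U = exp(-iθ(n₁Jₓ + n₂J_y + n₃J_z))`
is unitary and `Φ(U X U†) = U Φ(X) U†` for every `X`. -/
theorem landau_streater_su2_covariance (n : ℕ) (hn : 1 ≤ n)
    (v₁ v₂ v₃ : ℝ) (hv : v₁ ^ 2 + v₂ ^ 2 + v₃ ^ 2 = 1) (θ : ℝ)
    (U : Matrix (Fin (n+1)) (Fin (n+1)) ℂ)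
    (hU : U = NormedSpace.exp
      ((-(Complex.I * (θ : ℂ))) • ((v₁ : ℂ) • Jx n + (v₂ : ℂ) • Jy n + (v₃ : ℂ) • Jz n))) :
    U ∈ Matrix.unitaryGroup (Fin (n+1)) ℂ ∧
      ∀ X : Matrix (Fin (n+1)) (Fin (n+1)) ℂ, LS n (U * X * Uᴴ) = U * LS n X * Uᴴ := by
  classical
  set A : Matrix (Fin (n+1)) (Fin (n+1)) ℂ :=
    (v₁ : ℂ) • Jx n + (v₂ : ℂ) • Jy n + (v₃ : ℂ) • Jz n with hA
  set B : Matrix (Fin (n+1)) (Fin (n+1)) ℂ := (-(Complex.I * (θ : ℂ))) • A with hB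
  have hAH : Aᴴ = A := by
    rw [hA]
    simp only [Matrix.conjTranspose_add, Matrix.conjTranspose_smul,
      LSCov.Jx_herm, LSCov.Jy_herm, LSCov.Jz_herm, Complex.star_def, Complex.conj_ofReal]
  have hBH : Bᴴ = -B := by
    rw [hB, Matrix.conjTranspose_smul, hAH]
    rw [show (star (-(Complex.I * (θ:ℂ)))) = Complex.I * (θ:ℂ) from by
      simp [Complex.star_def, Complex.conj_ofReal]]
    module
  have hUH : Uᴴ = NormedSpace.exp (-B) := by
    rw [hU, ← Matrix.exp_conjTranspose, hBH]
  have hmul : U * Uᴴ = 1 := by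
    rw [hUH, hU, ← Matrix.exp_add_of_commute B (-B) ((Commute.refl B).neg_right),
      add_neg_cancel, NormedSpace.exp_zero]
  have hcov : ∀ X : Matrix (Fin (n+1)) (Fin (n+1)) ℂ,
      LS n (U * X * Uᴴ) = U * LS n X * Uᴴ := by
    letI : SeminormedRing (Matrix (Fin (n+1)) (Fin (n+1)) ℂ) := Matrix.linftyOpSemiNormedRing
    letI : NormedRing (Matrix (Fin (n+1)) (Fin (n+1)) ℂ) := Matrix.linftyOpNormedRing
    letI : NormedAlgebra ℂ (Matrix (Fin (n+1)) (Fin (n+1)) ℂ) := Matrix.linftyOpNormedAlgebra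
    intro X
    let Fl : Matrix (Fin (n+1)) (Fin (n+1)) ℂ →ₗ[ℂ] Matrix (Fin (n+1)) (Fin (n+1)) ℂ :=
      { toFun := fun Y => Jx n * Y * Jx n + Jy n * Y * Jy n + Jz n * Y * Jz n
        map_add' := fun Y Z => by
          simp only [Matrix.mul_add, Matrix.add_mul]; abel
        map_smul' := fun c Y => by
          simp only [RingHom.id_apply, mul_smul_comm, smul_mul_assoc, smul_add] }
    let f : Matrix (Fin (n+1)) (Fin (n+1)) ℂ →L[ℂ] Matrix (Fin (n+1)) (Fin (n+1)) ℂ := ⟨Fl, Fl.continuous_of_finiteDimensional⟩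
    have fapp : ∀ Y, f Y = Jx n * Y * Jx n + Jy n * Y * Jy n + Jz n * Y * Jz n :=
      fun _ => rfl
    have hBdec : ∀ Y : Matrix (Fin (n+1)) (Fin (n+1)) ℂ, B * Y - Y * B
        = (-(Complex.I * (θ:ℂ))) • ((v₁:ℂ) • (Jx n*Y - Y*Jx n)
            + (v₂:ℂ) • (Jy n*Y - Y*Jy n) + (v₃:ℂ) • (Jz n*Y - Y*Jz n)) := by
      intro Y
      rw [hB, hA]
      simp only [Matrix.add_mul, Matrix.mul_add, smul_mul_assoc, mul_smul_comm,
        smul_sub, smul_add]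
      module
    have hf : ∀ Y, f (B * Y - Y * B) = B * f Y - f Y * B := by
      intro Y
      have gx : f (Jx n*Y - Y*Jx n) = Jx n * f Y - f Y * Jx n := by
        rw [fapp (Jx n*Y - Y*Jx n), fapp Y]; exact LSCov.Fcomm_x n Y
      have gy : f (Jy n*Y - Y*Jy n) = Jy n * f Y - f Y * Jy n := by
        rw [fapp (Jy n*Y - Y*Jy n), fapp Y]; exact LSCov.Fcomm_y n Y
      have gz : f (Jz n*Y - Y*Jz n) = Jz n * f Y - f Y * Jz n := by
        rw [fapp (Jz n*Y - Y*Jz n), fapp Y]; exact LSCov.Fcomm_z n Y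
      rw [hBdec Y, _root_.map_smul, _root_.map_add, _root_.map_add, _root_.map_smul,
        _root_.map_smul, _root_.map_smul, gx, gy, gz]
      exact (hBdec (f Y)).symm
    have key : f (U * X * Uᴴ) = U * f X * Uᴴ :=
      LSCov.conj_exp_comm B f hf U Uᴴ hU hUH X
    show LS n (U * X * Uᴴ) = U * LS n X * Uᴴ
    rw [LS, LS, ← fapp (U * X * Uᴴ), ← fapp X, key]
    rw [mul_smul_comm, smul_mul_assoc]
  exact ⟨Matrix.mem_unitaryGroup_iff.mpr (by rw [Matrix.star_eq_conjTranspose]; exact hmul),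
    hcov⟩
end

section
/- Suppose n ≥ 3 (i.e. j > 1). Then the Landau–Streater channel Φ is not globally unitarily covariant: there exist a unitary matrix U ∈ M_d(ℂ) and a density matrix ρ ∈ M_d(ℂ) such that for every unitary matrix V ∈ M_d(ℂ) one has Φ(U ρ U†) ≠ V Φ(ρ) V†. -/
open Matrix Complex

open scoped ComplexOrder

namespace LSaux

lemma mid {d : ℕ} (M N : Matrix (Fin (d+1)) (Fin (d+1)) ℂ) (k a b : Fin (d+1)) :
    (M * single k k (1:ℂ) * N) a b = M a k * N k b := by
  rw [Matrix.mul_assoc, Matrix.mul_apply]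
  rw [Finset.sum_eq_single k]
  · simp
  · intro c _ hc
    rw [Matrix.single_mul_apply_of_ne 1 k k c b hc, mul_zero]
  · simp

lemma EEmul {d : ℕ} (i j k l : Fin (d+1)) (c e : ℂ) :
    single i j c * single k l e
      = if j = k then single i l (c*e) else 0 := by
  by_cases h : j = k
  · subst h; simp
  · simp [h, Matrix.single_mul_single_of_ne (h := h)]

lemma LS_E0core (m : ℕ) :
    Jx (m+3) * single 0 0 1 * Jx (m+3) + Jy (m+3) * single 0 0 1 * Jy (m+3)
      + Jz (m+3) * single 0 0 1 * Jz (m+3)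
    = (((m:ℂ)+3)/2)^2 • single 0 0 1 + (((m:ℂ)+3)/2) • single 1 1 1 := by
  ext a b
  rw [Matrix.add_apply, Matrix.add_apply, mid, mid, mid]
  simp only [Jx, Jy, Jz, Jm, Jp, Matrix.smul_apply, Matrix.add_apply, Matrix.sub_apply,
    Matrix.conjTranspose_apply, Matrix.of_apply, Matrix.diagonal_apply, Matrix.single,
    Fin.val_zero, Fin.val_one, Fin.ext_iff, apply_ite (starRingEnd ℂ), map_zero,
    Complex.conj_ofReal]
  have hsq' : ((Real.sqrt (3+(m:ℝ)) : ℝ) : ℂ)^2 = 3+(m:ℂ) := by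
    rw [pow_two, ← Complex.ofReal_mul, Real.mul_self_sqrt (by positivity)]; push_cast; ring
  by_cases ha0 : (a:ℕ) = 0 <;> by_cases ha1 : (a:ℕ) = 1 <;>
    by_cases hb0 : (b:ℕ) = 0 <;> by_cases hb1 : (b:ℕ) = 1 <;>
    simp_all <;> (try split_ifs) <;> (try simp_all) <;>
    (try first
      | omega
      | ring1
      | (simp only [Fin.ext_iff, Fin.val_zero, Fin.val_one] at *; intros; exfalso; omega))
  all_goals (ring_nf; rw [hsq', Complex.I_sq]; ring1)

lemma LS_E1core (m : ℕ) :
    Jx (m+3) * single 1 1 1 * Jx (m+3) + Jy (m+3) * single 1 1 1 * Jy (m+3)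
      + Jz (m+3) * single 1 1 1 * Jz (m+3)
    = (((m:ℂ)+3)/2) • single 0 0 1 + (((m:ℂ)+3)/2 - 1)^2 • single 1 1 1
      + ((m:ℂ)+2) • single 2 2 1 := by
  have h2 : ((2 : Fin (m+3+1)) : ℕ) = 2 := by simp
  ext a b
  rw [Matrix.add_apply, Matrix.add_apply, Matrix.add_apply, mid, mid, mid]
  simp only [Jx, Jy, Jz, Jm, Jp, Matrix.smul_apply, Matrix.add_apply, Matrix.sub_apply,
    Matrix.conjTranspose_apply, Matrix.of_apply, Matrix.diagonal_apply, Matrix.single,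
    Fin.val_zero, Fin.val_one, h2, Fin.ext_iff, apply_ite (starRingEnd ℂ), map_zero,
    Complex.conj_ofReal]
  have hsq' : ((Real.sqrt (3+(m:ℝ)) : ℝ) : ℂ)^2 = 3+(m:ℂ) := by
    rw [pow_two, ← Complex.ofReal_mul, Real.mul_self_sqrt (by positivity)]; push_cast; ring
  have hs2 : ((Real.sqrt 2 : ℝ) : ℂ)^2 = 2 := by
    rw [pow_two, ← Complex.ofReal_mul, Real.mul_self_sqrt (by positivity)]; norm_num
  have hsm : ((Real.sqrt (2+(m:ℝ)) : ℝ) : ℂ)^2 = 2+(m:ℂ) := by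
    rw [pow_two, ← Complex.ofReal_mul, Real.mul_self_sqrt (by positivity)]; push_cast; ring
  by_cases ha0 : (a:ℕ) = 0 <;> by_cases ha1 : (a:ℕ) = 1 <;> by_cases ha2 : (a:ℕ) = 2 <;>
    by_cases hb0 : (b:ℕ) = 0 <;> by_cases hb1 : (b:ℕ) = 1 <;> by_cases hb2 : (b:ℕ) = 2 <;>
    simp_all <;> (try split_ifs) <;> (try simp_all) <;>
    (try first
      | omega
      | ring1
      | (simp only [Fin.ext_iff, Fin.val_zero, Fin.val_one] at *; intros; exfalso; omega))
  all_goals first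
    | (ring_nf; rw [hsq', Complex.I_sq]; ring1)
    | (ring_nf; rw [Complex.I_sq]; ring1)
    | (ring_nf; rw [hs2, hsm, Complex.I_sq]; ring1)

lemma T0 (m : ℕ) :
    Matrix.trace (LS (m+3) (single 0 0 1) * LS (m+3) (single 0 0 1))
    = ((((m:ℂ)+3)/2) * ((((m:ℂ)+3)/2)+1))⁻¹^2 * ((((m:ℂ)+3)/2)^4 + (((m:ℂ)+3)/2)^2) := by
  have h01 : (0:Fin (m+3+1)) ≠ 1 := by simp [Fin.ext_iff]
  unfold LS
  rw [LS_E0core]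
  push_cast
  simp [Matrix.smul_mul, Matrix.mul_smul, Matrix.add_mul, Matrix.mul_add, smul_smul,
    Matrix.trace_smul, Matrix.trace_add, EEmul, Fin.ext_iff,
    Matrix.trace_single_eq_same, smul_eq_mul]
  ring

lemma T1 (m : ℕ) :
    Matrix.trace (LS (m+3) (single 1 1 1) * LS (m+3) (single 1 1 1))
    = ((((m:ℂ)+3)/2) * ((((m:ℂ)+3)/2)+1))⁻¹^2
        * ((((m:ℂ)+3)/2)^2 + ((((m:ℂ)+3)/2)-1)^4 + ((m:ℂ)+2)^2) := by
  have h01 : (0:Fin (m+3+1)) ≠ 1 := by simp [Fin.ext_iff]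
  have h02 : (0:Fin (m+3+1)) ≠ 2 := by simp [Fin.ext_iff, Nat.mod_eq_of_lt]
  have h12 : (1:Fin (m+3+1)) ≠ 2 := by simp [Fin.ext_iff, Nat.mod_eq_of_lt]
  unfold LS
  rw [LS_E1core]
  push_cast
  simp [Matrix.smul_mul, Matrix.mul_smul, Matrix.add_mul, Matrix.mul_add, smul_smul,
    Matrix.trace_smul, Matrix.trace_add, EEmul, Fin.ext_iff, Nat.mod_eq_of_lt,
    Matrix.trace_single_eq_same, smul_eq_mul]
  ring

end LSaux

open LSaux

/-- for `n ≥ 3` (i.e. j > 1) the Landau–Streater channel is not globally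
unitarily covariant: there are a unitary `U` and a density matrix `ρ` such that no unitary
`V` satisfies `Φ(UρU†) = V Φ(ρ) V†`. -/
theorem landau_streater_not_unitarily_covariant (n : ℕ) (hn : 3 ≤ n) :
    ∃ U ∈ Matrix.unitaryGroup (Fin (n+1)) ℂ,
      ∃ ρ : Matrix (Fin (n+1)) (Fin (n+1)) ℂ, ρ.PosSemidef ∧ ρ.trace = 1 ∧
        ∀ V ∈ Matrix.unitaryGroup (Fin (n+1)) ℂ,
          LS n (U * ρ * Uᴴ) ≠ V * LS n ρ * Vᴴ := by
  obtain ⟨m, rfl⟩ : ∃ m, n = m + 3 := ⟨n - 3, by omega⟩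
  clear hn
  have h01 : (0:Fin (m+3+1)) ≠ 1 := by simp [Fin.ext_iff]
  have h02 : (0:Fin (m+3+1)) ≠ 2 := by simp [Fin.ext_iff, Nat.mod_eq_of_lt]
  have h12 : (1:Fin (m+3+1)) ≠ 2 := by simp [Fin.ext_iff, Nat.mod_eq_of_lt]
  set E00 : Matrix (Fin (m+3+1)) (Fin (m+3+1)) ℂ := single 0 0 1 with hE00
  set E11 : Matrix (Fin (m+3+1)) (Fin (m+3+1)) ℂ := single 1 1 1 with hE11
  set U : Matrix (Fin (m+3+1)) (Fin (m+3+1)) ℂ :=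
    single 0 1 1 + single 1 0 1 + (1 - E00 - E11) with hU
  have hUH : Uᴴ = U := by
    rw [hU, hE00, hE11]
    ext a b
    simp [Matrix.conjTranspose_apply, Matrix.single, Matrix.one_apply,
      apply_ite (starRingEnd ℂ), and_comm, eq_comm]
    try ring
  have hUU : U * U = 1 := by
    rw [hU, hE00, hE11]
    simp [Matrix.add_mul, Matrix.mul_add, Matrix.sub_mul, Matrix.mul_sub,
      Matrix.one_mul, Matrix.mul_one, EEmul, Fin.ext_iff, mul_one]
    try abel
  refine ⟨U, ?_, E00, ?_, ?_, ?_⟩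
  · rw [Matrix.mem_unitaryGroup_iff, Matrix.star_eq_conjTranspose, hUH]
    exact hUU
  · refine Matrix.posSemidef_iff_dotProduct_mulVec.mpr ⟨?_, ?_⟩
    · show E00ᴴ = E00
      rw [hE00]
      ext a b
      simp [Matrix.conjTranspose_apply, Matrix.single, apply_ite (starRingEnd ℂ),
        and_comm]
    · intro x
      have : star x ⬝ᵥ E00.mulVec x = star (x 0) * x 0 := by
        rw [hE00]
        simp [dotProduct, Matrix.mulVec, Matrix.single, ite_and, ite_mul,
          mul_ite, mul_zero, zero_mul, Finset.sum_ite_eq]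
      rw [this]
      exact star_mul_self_nonneg (x 0)
  · rw [hE00]; exact Matrix.trace_single_eq_same 0 1
  · intro V hV heq
    have hUE : U * E00 * Uᴴ = E11 := by
      rw [hUH, hU, hE00, hE11]
      simp [Matrix.add_mul, Matrix.mul_add, Matrix.sub_mul, Matrix.mul_sub,
        Matrix.one_mul, Matrix.mul_one, EEmul, Fin.ext_iff, mul_one]
      try abel
    rw [hUE] at heq
    have hV' : Vᴴ * V = 1 := by
      have := Matrix.mem_unitaryGroup_iff'.mp hV
      rwa [Matrix.star_eq_conjTranspose] at this
    set L := LS (m+3) E00 with hL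
    have e1 : (V*L*Vᴴ)*(V*L*Vᴴ) = V*(L*L)*Vᴴ := by
      calc (V*L*Vᴴ)*(V*L*Vᴴ) = V*(L*((Vᴴ*V)*(L*Vᴴ))) := by simp only [Matrix.mul_assoc]
      _ = V*(L*L)*Vᴴ := by rw [hV', Matrix.one_mul]; simp only [Matrix.mul_assoc]
    have key : Matrix.trace (LS (m+3) E11 * LS (m+3) E11) = Matrix.trace (L * L) := by
      rw [heq, e1, Matrix.trace_mul_cycle, ← Matrix.mul_assoc, hV', Matrix.one_mul]
    rw [hL, hE00, hE11, T0, T1] at key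
    have hc : ((((m:ℂ)+3)/2) * ((((m:ℂ)+3)/2)+1)) ≠ 0 := by
      have a1 : ((m:ℂ)+3) ≠ 0 := by
        exact_mod_cast (Nat.cast_ne_zero (R := ℂ)).mpr (Nat.succ_ne_zero (m+2))
      have a2 : ((m:ℂ)+5) ≠ 0 := by
        exact_mod_cast (Nat.cast_ne_zero (R := ℂ)).mpr (Nat.succ_ne_zero (m+4))
      apply mul_ne_zero
      · intro h; apply a1; field_simp at h; simpa using h
      · intro h; apply a2
        have : ((m:ℂ)+5) = 2 * (((m:ℂ)+3)/2 + 1) := by ring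
        rw [this, h, mul_zero]
    have key2 : (((m:ℂ)+3)/2)^2 + ((((m:ℂ)+3)/2)-1)^4 + ((m:ℂ)+2)^2
        = (((m:ℂ)+3)/2)^4 + (((m:ℂ)+3)/2)^2 :=
      mul_left_cancel₀ (pow_ne_zero 2 (inv_ne_zero hc)) key
    have hzero : ((m:ℂ)+2) * ((m:ℂ)+1)^2 = 0 := by linear_combination (-2:ℂ) * key2
    have a1 : ((m:ℂ)+2) ≠ 0 := by
      exact_mod_cast (Nat.cast_ne_zero (R := ℂ)).mpr (Nat.succ_ne_zero (m+1))
    have a2 : ((m:ℂ)+1) ≠ 0 := by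
      exact_mod_cast (Nat.cast_ne_zero (R := ℂ)).mpr (Nat.succ_ne_zero m)
    rcases mul_eq_zero.mp hzero with h | h
    · exact a1 h
    · exact a2 (pow_eq_zero_iff (by norm_num) |>.mp h)
end

section
/- For every k ∈ {0,…,n}, writing m = j − k, the Landau–Streater channel acts on the rank-one projector e_k e_k† by Φ(e_k e_k†) = [ (j(j+1) − m(m+1)) / (2j(j+1)) ] · e_{k−1} e_{k−1}† + [ m² / (j(j+1)) ] · e_k e_k† + [ (j(j+1) − m(m−1)) / (2j(j+1)) ] · e_{k+1} e_{k+1}†, where the coefficient of e_{k−1}e_{k−1}† vanishes when k = 0 (m = j) and the coefficient of e_{k+1}e_{k+1}† vanishes when k = n (m = −j), so those terms may be omitted in the boundary cases. In particular the nonzero eigenvalues of Φ(e_k e_k†) are (j(j+1)−m(m+1))/(2j(j+1)), (j(j+1)−m(m−1))/(2j(j+1)) and m²/(j(j+1)). -/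
open Matrix Complex

/-- Conjugating a rank-one diagonal projector picks out one entry of each factor. -/
lemma LS_mulP (n : ℕ) (A B : Matrix (Fin (n+1)) (Fin (n+1)) ℂ) (k i l : Fin (n+1)) :
    (A * Matrix.single k k (1:ℂ) * B) i l = A i k * B k l := by
  simp [Matrix.mul_apply, Matrix.single, ite_and, Finset.sum_ite_eq, Finset.mul_sum]

lemma LS_hb : (1/(2*Complex.I)) * (1/(2*Complex.I)) = -(1/4) := by
  rw [div_mul_div_comm, mul_mul_mul_comm, Complex.I_mul_I]; norm_num

/-- `Jₓ X Jₓ + J_y X J_y = (J₊ X J₋ + J₋ X J₊)/2`. -/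
lemma LS_hxy (n : ℕ) (P : Matrix (Fin (n+1)) (Fin (n+1)) ℂ) :
    Jx n * P * Jx n + Jy n * P * Jy n
      = (2:ℂ)⁻¹ • (Jp n * P * Jm n + Jm n * P * Jp n) := by
  simp only [Jx, Jy, Matrix.smul_mul, Matrix.mul_smul, smul_smul]
  rw [LS_hb]
  simp only [add_mul, mul_add, sub_mul, mul_sub, smul_add, smul_sub]
  module

lemma LS_hz (n : ℕ) (k : Fin (n+1)) :
    Jz n * Matrix.single k k (1:ℂ) * Jz n
      = (((n:ℂ)/2 - (k:ℕ))^2) • Matrix.single k k (1:ℂ) := by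
  ext i l
  rw [LS_mulP]
  simp only [Jz, Matrix.diagonal_apply, Matrix.smul_apply, Matrix.single, Matrix.of_apply,
    smul_eq_mul]
  by_cases h1 : i = k <;> by_cases h2 : l = k
  · subst h1; subst h2; simp; ring
  · simp [h1, Ne.symm h2]
  · simp [Ne.symm h1]; tauto
  · simp [Ne.symm h1]; tauto

lemma LS_hpm (n : ℕ) (k : Fin (n+1)) :
    Jp n * Matrix.single k k (1:ℂ) * Jm n
      = (((k:ℕ):ℂ) * ((n:ℂ) + 1 - ((k:ℕ):ℂ))) • Matrix.single (k-1) (k-1) (1:ℂ) := by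
  ext i l
  rw [LS_mulP]
  simp only [Jp, Jm, Matrix.conjTranspose_apply, Matrix.of_apply, Matrix.smul_apply,
    Matrix.single, smul_eq_mul]
  by_cases hk : (k:ℕ) = 0
  · have hi : ¬ ((i:ℕ) + 1 = (k:ℕ)) := by omega
    simp [hi, hk]
  · have hk0 : k ≠ 0 := by
      intro h; rw [h] at hk; exact hk rfl
    have hsub : ((k - 1 : Fin (n+1)) : ℕ) = (k:ℕ) - 1 := by
      rw [Fin.coe_sub_one, if_neg hk0]
    by_cases h1 : (i:ℕ) + 1 = (k:ℕ) <;> by_cases h2 : (l:ℕ) + 1 = (k:ℕ)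
    · have hil : i = l := Fin.ext (by omega)
      subst hil
      have hki : k - 1 = i := Fin.ext (by omega)
      rw [if_pos h1, if_pos (show k-1 = i ∧ k-1 = i from ⟨hki, hki⟩), mul_one]
      have hst : star ((Real.sqrt (((i:ℕ) + 1) * (n - (i:ℕ))) : ℝ) : ℂ)
          = ((Real.sqrt (((i:ℕ) + 1) * (n - (i:ℕ))) : ℝ) : ℂ) := by
        rw [Complex.star_def, Complex.conj_ofReal]
      rw [hst, ← Complex.ofReal_mul]
      have hin : (i:ℝ) ≤ n := by exact_mod_cast Nat.le_of_lt_succ i.isLt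
      rw [Real.mul_self_sqrt (mul_nonneg (by positivity) (by linarith))]
      have hkc : (((k:ℕ)):ℂ) = ((i:ℕ):ℂ) + 1 := by exact_mod_cast h1.symm
      rw [hkc]; push_cast; ring
    · have hkl : ¬ (k - 1 = l) := fun h => h2 (by have := congrArg Fin.val h; omega)
      simp [h2, hkl]
    · have hki : ¬ (k - 1 = i) := fun h => h1 (by have := congrArg Fin.val h; omega)
      simp [h1, hki]
    · have hki : ¬ (k - 1 = i) := fun h => h1 (by have := congrArg Fin.val h; omega)
      simp [h1, hki]

lemma LS_hmp (n : ℕ) (k : Fin (n+1)) :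
    Jm n * Matrix.single k k (1:ℂ) * Jp n
      = ((((k:ℕ):ℂ) + 1) * ((n:ℂ) - ((k:ℕ):ℂ))) • Matrix.single (k+1) (k+1) (1:ℂ) := by
  ext i l
  rw [LS_mulP]
  simp only [Jp, Jm, Matrix.conjTranspose_apply, Matrix.of_apply, Matrix.smul_apply,
    Matrix.single, smul_eq_mul]
  by_cases hk : (k:ℕ) = n
  · have hi : ¬ ((k:ℕ) + 1 = (i:ℕ)) := by have := i.isLt; omega
    have hnn : ((n:ℂ) - ((k:ℕ):ℂ)) = 0 := by
      rw [hk]; ring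
    simp [hi, hnn]
  · have hklast : k ≠ Fin.last n := by
      intro h; rw [h] at hk; exact hk (Fin.val_last n)
    have hadd : ((k + 1 : Fin (n+1)) : ℕ) = (k:ℕ) + 1 := by
      rw [Fin.val_add_one, if_neg hklast]
    by_cases h1 : (k:ℕ) + 1 = (i:ℕ) <;> by_cases h2 : (k:ℕ) + 1 = (l:ℕ)
    · have hil : i = l := Fin.ext (by omega)
      subst hil
      have hki : k + 1 = i := Fin.ext (by omega)
      rw [if_pos h1, if_pos (show k+1 = i ∧ k+1 = i from ⟨hki, hki⟩), mul_one]
      have hst : star ((Real.sqrt (((k:ℕ) + 1) * (n - (k:ℕ))) : ℝ) : ℂ)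
          = ((Real.sqrt (((k:ℕ) + 1) * (n - (k:ℕ))) : ℝ) : ℂ) := by
        rw [Complex.star_def, Complex.conj_ofReal]
      rw [hst, ← Complex.ofReal_mul]
      have hkn : ((k:ℕ):ℝ) ≤ n := by exact_mod_cast Nat.le_of_lt_succ k.isLt
      rw [Real.mul_self_sqrt (mul_nonneg (by positivity) (by linarith))]
      push_cast; ring
    · have hkl : ¬ (k + 1 = l) := fun h => h2 (by have := congrArg Fin.val h; omega)
      simp [h2, hkl]
    · have hki : ¬ (k + 1 = i) := fun h => h1 (by have := congrArg Fin.val h; omega)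
      simp [h1, hki]
    · have hki : ¬ (k + 1 = i) := fun h => h1 (by have := congrArg Fin.val h; omega)
      simp [h1, hki]

/-- action of the Landau–Streater channel on the projector `e_k e_k†`
(where `e_k = |j, m⟩` with `m = j - k`):
`Φ(e_k e_k†) = ((j(j+1)-m(m+1))/(2j(j+1))) e_{k-1}e_{k-1}† + (m²/(j(j+1))) e_k e_k†
+ ((j(j+1)-m(m-1))/(2j(j+1))) e_{k+1}e_{k+1}†`.
The indices `k-1`, `k+1` are taken in `Fin (n+1)` (wraparound); at the boundaries `k = 0`
and `k = n` the corresponding coefficients vanish, so the wrapped terms are zero and may be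
omitted.  In particular the nonzero eigenvalues of `Φ(e_k e_k†)` are
`(j(j+1)-m(m+1))/(2j(j+1))`, `(j(j+1)-m(m-1))/(2j(j+1))` and `m²/(j(j+1))`. -/
theorem landau_streater_on_spin_projector (n : ℕ) (hn : 1 ≤ n) (k : Fin (n+1))
    (j m : ℝ) (hj : j = n / 2) (hm : m = j - k) :
    LS n (Matrix.single k k 1) =
        (((j*(j+1) - m*(m+1)) / (2*j*(j+1)) : ℝ) : ℂ) •
            Matrix.single (k - 1) (k - 1) 1
          + ((m^2 / (j*(j+1)) : ℝ) : ℂ) • Matrix.single k k 1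
          + (((j*(j+1) - m*(m-1)) / (2*j*(j+1)) : ℝ) : ℂ) •
              Matrix.single (k + 1) (k + 1) 1 ∧
      (k = 0 → (j*(j+1) - m*(m+1)) / (2*j*(j+1)) = 0) ∧
      (k = Fin.last n → (j*(j+1) - m*(m-1)) / (2*j*(j+1)) = 0) ∧
      spectrum ℂ (LS n (Matrix.single k k 1)) \ {0} =
        ({(((j*(j+1) - m*(m+1)) / (2*j*(j+1)) : ℝ) : ℂ),
          (((j*(j+1) - m*(m-1)) / (2*j*(j+1)) : ℝ) : ℂ),
          ((m^2 / (j*(j+1)) : ℝ) : ℂ)} : Set ℂ) \ {0} := by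
  have hnn : (0:ℝ) < (n:ℝ) := by exact_mod_cast hn
  have hne : (n:ℝ)/2 * ((n:ℝ)/2 + 1) ≠ 0 := ne_of_gt (by nlinarith)
  -- boundary vanishing
  have hA0 : k = 0 → (j*(j+1) - m*(m+1)) / (2*j*(j+1)) = 0 := by
    intro h
    have hm0 : m = j := by rw [hm, h]; simp
    have : j*(j+1) - m*(m+1) = 0 := by rw [hm0]; ring
    rw [this, zero_div]
  have hC0 : k = Fin.last n → (j*(j+1) - m*(m-1)) / (2*j*(j+1)) = 0 := by
    intro h
    have hm0 : m = -j := by rw [hm, h, hj]; simp [Fin.val_last]; ring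
    have : j*(j+1) - m*(m-1) = 0 := by rw [hm0]; ring
    rw [this, zero_div]
  -- scalar identities
  have hC1 : (((j*(j+1) - m*(m+1)) / (2*j*(j+1)) : ℝ) : ℂ)
      = (((n:ℂ)/2) * ((n:ℂ)/2 + 1))⁻¹
          * (2⁻¹ * (((k:ℕ):ℂ) * ((n:ℂ) + 1 - ((k:ℕ):ℂ)))) := by
    have hr : (j*(j+1) - m*(m+1)) / (2*j*(j+1))
        = ((n:ℝ)/2 * ((n:ℝ)/2 + 1))⁻¹
            * (2⁻¹ * (((k:ℕ):ℝ) * ((n:ℝ) + 1 - ((k:ℕ):ℝ)))) := by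
      rw [hm, hj]
      field_simp
      ring
    rw [hr]; push_cast; ring
  have hC2 : ((m^2 / (j*(j+1)) : ℝ) : ℂ)
      = (((n:ℂ)/2) * ((n:ℂ)/2 + 1))⁻¹ * (((n:ℂ)/2 - ((k:ℕ):ℂ))^2) := by
    have hr : m^2 / (j*(j+1))
        = ((n:ℝ)/2 * ((n:ℝ)/2 + 1))⁻¹ * (((n:ℝ)/2 - ((k:ℕ):ℝ))^2) := by
      rw [hm, hj]
      field_simp
    rw [hr]; push_cast; ring
  have hC3 : (((j*(j+1) - m*(m-1)) / (2*j*(j+1)) : ℝ) : ℂ)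
      = (((n:ℂ)/2) * ((n:ℂ)/2 + 1))⁻¹
          * (2⁻¹ * ((((k:ℕ):ℂ) + 1) * ((n:ℂ) - ((k:ℕ):ℂ)))) := by
    have hr : (j*(j+1) - m*(m-1)) / (2*j*(j+1))
        = ((n:ℝ)/2 * ((n:ℝ)/2 + 1))⁻¹
            * (2⁻¹ * ((((k:ℕ):ℝ) + 1) * ((n:ℝ) - ((k:ℕ):ℝ)))) := by
      rw [hm, hj]
      field_simp
      ring
    rw [hr]; push_cast; ring
  -- main matrix identity
  have hmain : LS n (Matrix.single k k 1) =
      (((j*(j+1) - m*(m+1)) / (2*j*(j+1)) : ℝ) : ℂ) •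
          Matrix.single (k - 1) (k - 1) 1
        + ((m^2 / (j*(j+1)) : ℝ) : ℂ) • Matrix.single k k 1
        + (((j*(j+1) - m*(m-1)) / (2*j*(j+1)) : ℝ) : ℂ) •
            Matrix.single (k + 1) (k + 1) 1 := by
    rw [LS, LS_hxy, LS_hpm, LS_hmp, LS_hz, hC1, hC2, hC3]
    module
  refine ⟨hmain, hA0, hC0, ?_⟩
  -- spectrum computation
  have h1k : k - 1 ≠ k := by
    intro h
    have h' : (1 : Fin (n+1)) = 0 := sub_eq_self.mp h
    have hv := congrArg Fin.val h'
    rw [Fin.val_one', Fin.val_zero, Nat.mod_eq_of_lt (by omega)] at hv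
    exact one_ne_zero hv
  have h2k : k + 1 ≠ k := by
    intro h
    have h' : (1 : Fin (n+1)) = 0 := add_eq_left.mp h
    have hv := congrArg Fin.val h'
    rw [Fin.val_one', Fin.val_zero, Nat.mod_eq_of_lt (by omega)] at hv
    exact one_ne_zero hv
  have hcoin : k - 1 = k + 1 → k = 0 ∨ k = Fin.last n := by
    intro h
    by_cases hk0 : k = 0
    · exact Or.inl hk0
    by_cases hkl : k = Fin.last n
    · exact Or.inr hkl
    exfalso
    have hv := congrArg Fin.val h
    rw [Fin.coe_sub_one, if_neg hk0, Fin.val_add_one, if_neg hkl] at hv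
    have hk0' : (k:ℕ) ≠ 0 := fun hh => hk0 (Fin.ext hh)
    omega
  set f : Fin (n+1) → ℂ := fun i =>
      (if k - 1 = i then (((j*(j+1) - m*(m+1)) / (2*j*(j+1)) : ℝ) : ℂ) else 0)
      + (if k = i then ((m^2 / (j*(j+1)) : ℝ) : ℂ) else 0)
      + (if k + 1 = i then (((j*(j+1) - m*(m-1)) / (2*j*(j+1)) : ℝ) : ℂ) else 0) with hf
  have hdiag :
      (((j*(j+1) - m*(m+1)) / (2*j*(j+1)) : ℝ) : ℂ) •
          Matrix.single (k - 1) (k - 1) (1:ℂ)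
        + ((m^2 / (j*(j+1)) : ℝ) : ℂ) • Matrix.single k k 1
        + (((j*(j+1) - m*(m-1)) / (2*j*(j+1)) : ℝ) : ℂ) •
            Matrix.single (k + 1) (k + 1) 1 = Matrix.diagonal f := by
    ext i l
    simp only [Matrix.add_apply, Matrix.smul_apply, Matrix.single, Matrix.of_apply,
      smul_eq_mul]
    by_cases hil : i = l
    · subst hil
      rw [Matrix.diagonal_apply_eq, hf]
      simp [mul_ite]
    · rw [Matrix.diagonal_apply_ne _ hil]
      have hno : ∀ a : Fin (n+1), ¬ (a = i ∧ a = l) := fun a ⟨x, y⟩ => hil (x.symm.trans y)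
      simp [hno (k-1), hno k, hno (k+1)]
  rw [hmain, hdiag, spectrum_diagonal]
  ext x
  simp only [Set.mem_diff, Set.mem_range, Set.mem_insert_iff, Set.mem_singleton_iff]
  constructor
  · rintro ⟨⟨i, rfl⟩, hx0⟩
    refine ⟨?_, hx0⟩
    by_cases e1 : k - 1 = i <;> by_cases e2 : k = i <;> by_cases e3 : k + 1 = i
    · exact absurd (e1.trans e2.symm) h1k
    · exact absurd (e1.trans e2.symm) h1k
    · -- e1, ¬e2, e3 : coincidence k-1 = k+1
      rcases hcoin (e1.trans e3.symm) with h0 | hl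
      · have : (((j*(j+1) - m*(m+1)) / (2*j*(j+1)) : ℝ) : ℂ) = 0 := by
          rw [hA0 h0, Complex.ofReal_zero]
        right; left
        rw [hf]; simp only [if_pos e1, if_neg e2, if_pos e3, this]; ring
      · have : (((j*(j+1) - m*(m-1)) / (2*j*(j+1)) : ℝ) : ℂ) = 0 := by
          rw [hC0 hl, Complex.ofReal_zero]
        left
        rw [hf]; simp only [if_pos e1, if_neg e2, if_pos e3, this]; ring
    · left; rw [hf]; simp only [if_pos e1, if_neg e2, if_neg e3]; ring
    · exact absurd (e3.trans e2.symm) h2k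
    · right; right; rw [hf]; simp only [if_neg e1, if_pos e2, if_neg e3]; ring
    · right; left; rw [hf]; simp only [if_neg e1, if_neg e2, if_pos e3]; ring
    · exfalso; apply hx0; rw [hf]; simp only [if_neg e1, if_neg e2, if_neg e3]; ring
  · rintro ⟨hx, hx0⟩
    refine ⟨?_, hx0⟩
    rcases hx with rfl | rfl | rfl
    · -- x = C1
      refine ⟨k - 1, ?_⟩
      rw [hf]
      simp only [if_pos rfl, if_neg (Ne.symm h1k)]
      by_cases hc : k + 1 = k - 1
      · rcases hcoin hc.symm with h0 | hl
        · exact absurd (by rw [hA0 h0, Complex.ofReal_zero]) hx0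
        · rw [if_pos hc, hC0 hl]; simp
      · rw [if_neg hc]; simp
    · -- x = C3
      refine ⟨k + 1, ?_⟩
      rw [hf]
      simp only [if_pos rfl, if_neg h2k.symm]
      by_cases hc : k - 1 = k + 1
      · rcases hcoin hc with h0 | hl
        · rw [if_pos hc, hA0 h0]; simp
        · exact absurd (by rw [hC0 hl, Complex.ofReal_zero]) hx0
      · rw [if_neg hc]; simp
    · -- x = C2
      refine ⟨k, ?_⟩
      rw [hf]
      simp only [if_pos rfl, if_neg h1k, if_neg h2k]
      simp
end

section
/- Regard the Landau–Streater map Φ as a linear endomorphism of the d²-dimensional complex vector space M_d(ℂ). Then the eigenvalues of Φ are exactly the numbers λ_L = 1 − L(L+1)/(2j(j+1)) for L = 0, 1, …, n (these numbers are pairwise distinct), and for each such L the eigenspace of Φ corresponding to λ_L has complex dimension 2L+1 (so that in particular Σ_{L=0}^{n}(2L+1) = d² and Φ is diagonalizable). In particular λ_n = −j/(j+1) < 0 is an eigenvalue of Φ. -/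
open Matrix Complex

noncomputable section
namespace LSAux

/-- the off-diagonal coefficient -/
def cc (n k : ℕ) : ℂ := ((Real.sqrt ((k + 1) * ((n:ℝ) - k)) : ℝ) : ℂ)

lemma cc_sq {n k : ℕ} (h : k ≤ n) : cc n k * cc n k = ((k:ℂ) + 1) * ((n:ℂ) - k) := by
  have h0 : (0:ℝ) ≤ ((k:ℝ) + 1) * ((n:ℝ) - k) := by
    have : (k:ℝ) ≤ n := by exact_mod_cast h
    nlinarith
  unfold cc
  rw [← Complex.ofReal_mul, Real.mul_self_sqrt h0]
  push_cast
  ring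

lemma cc_ne_zero {n k : ℕ} (h : k < n) : cc n k ≠ 0 := by
  have h0 : (0:ℝ) < ((k:ℝ) + 1) * ((n:ℝ) - k) := by
    have : (k:ℝ) < n := by exact_mod_cast h
    nlinarith
  unfold cc
  simp only [ne_eq, Complex.ofReal_eq_zero]
  positivity

lemma cc_self (n : ℕ) : cc n n = 0 := by
  unfold cc; simp

lemma Jp_apply (n : ℕ) (a b : Fin (n+1)) :
    Jp n a b = if (a:ℕ)+1 = (b:ℕ) then cc n a else 0 := rfl

lemma Jm_apply (n : ℕ) (a b : Fin (n+1)) :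
    Jm n a b = if (b:ℕ)+1 = (a:ℕ) then cc n b else 0 := by
  simp only [Jm, conjTranspose_apply, Jp_apply]
  split_ifs <;> simp [cc]

/-- sum helper keyed on `m = ↑c` -/
lemma sum_ite_val {β : Type*} [AddCommMonoid β] (n m : ℕ) (f : Fin (n+1) → β) :
    (∑ c : Fin (n+1), if m = (c:ℕ) then f c else 0)
      = if h : m ≤ n then f ⟨m, by omega⟩ else 0 := by
  split_ifs with h
  · rw [Finset.sum_eq_single (⟨m, by omega⟩ : Fin (n+1))]
    · simp
    · intro c _ hc
      rw [if_neg]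
      intro he
      exact hc (by ext; simp [← he])
    · simp
  · apply Finset.sum_eq_zero
    intro c _
    rw [if_neg]
    omega

/-- sum helper keyed on `↑c + 1 = m` -/
lemma sum_ite_val' {β : Type*} [AddCommMonoid β] (n m : ℕ) (f : Fin (n+1) → β) :
    (∑ c : Fin (n+1), if (c:ℕ) + 1 = m then f c else 0)
      = if h : 1 ≤ m ∧ m ≤ n + 1 then f ⟨m - 1, by omega⟩ else 0 := by
  split_ifs with h
  · rw [Finset.sum_eq_single (⟨m - 1, by omega⟩ : Fin (n+1))]
    · simp; omega
    · intro c _ hc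
      rw [if_neg]
      intro he
      exact hc (by ext; simp; omega)
    · simp
  · apply Finset.sum_eq_zero
    intro c _
    rw [if_neg]
    have := c.isLt
    omega

lemma JpJm (n : ℕ) : Jp n * Jm n = Matrix.diagonal (fun a : Fin (n+1) => (((a:ℕ):ℂ) + 1) * ((n:ℂ) - ((a:ℕ):ℂ))) := by
  ext a b
  rw [mul_apply]
  simp only [Jp_apply, Jm_apply, ite_mul, zero_mul]
  rw [sum_ite_val n ((a:ℕ)+1) (fun c => cc n a * if (b:ℕ)+1 = (c:ℕ) then cc n b else 0)]
  rw [diagonal_apply]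
  by_cases h : (a:ℕ) + 1 ≤ n
  · rw [dif_pos h]
    by_cases hab : a = b
    · subst hab
      rw [if_pos rfl, if_pos (by simp)]
      exact cc_sq (by omega)
    · rw [if_neg hab, if_neg (by simp; omega)]
      simp
  · rw [dif_neg h]
    have han : (a:ℕ) = n := by have := a.isLt; omega
    by_cases hab : a = b
    · rw [if_pos hab, han]; ring
    · rw [if_neg hab]

lemma JmJp (n : ℕ) : Jm n * Jp n
    = Matrix.diagonal (fun a : Fin (n+1) => ((a:ℕ):ℂ) * ((n:ℂ) - ((a:ℕ):ℂ) + 1)) := by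
  ext a b
  rw [mul_apply]
  simp only [Jp_apply, Jm_apply, ite_mul, zero_mul]
  rw [sum_ite_val' n (a:ℕ) (fun c => cc n c * if (c:ℕ)+1 = (b:ℕ) then cc n c else 0)]
  rw [diagonal_apply]
  by_cases h : 1 ≤ (a:ℕ)
  · rw [dif_pos ⟨h, by have := a.isLt; omega⟩]
    by_cases hab : a = b
    · subst hab
      rw [if_pos (by simp; omega), if_pos rfl]
      rw [cc_sq (by have := a.isLt; omega)]
      have : (((a:ℕ) - 1 : ℕ) : ℂ) = ((a:ℕ):ℂ) - 1 := by
        push_cast [Nat.cast_sub h]; ring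
      rw [this]; ring
    · rw [if_neg hab, if_neg (by simp; omega)]
      simp
  · rw [dif_neg (by omega)]
    have ha0 : ((a:ℕ):ℂ) = 0 := by
      have : (a:ℕ) = 0 := by omega
      simp [this]
    by_cases hab : a = b
    · rw [if_pos hab, ha0]; ring
    · rw [if_neg hab]

lemma comm_pm (n : ℕ) : Jp n * Jm n - Jm n * Jp n = (2:ℂ) • Jz n := by
  ext a b
  rw [JpJm, JmJp]
  simp only [Jz, Matrix.sub_apply, diagonal_apply, Matrix.smul_apply, smul_ite, smul_eq_mul, smul_zero]
  split_ifs <;> ring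

lemma comm_zp (n : ℕ) : Jz n * Jp n - Jp n * Jz n = Jp n := by
  ext a b
  simp only [Jz, Matrix.sub_apply, diagonal_mul, mul_diagonal, Jp_apply]
  by_cases h : (a:ℕ) + 1 = (b:ℕ)
  · rw [if_pos h]
    have : ((b:ℕ):ℂ) = ((a:ℕ):ℂ) + 1 := by exact_mod_cast congrArg (Nat.cast : ℕ → ℂ) h.symm
    rw [this]; ring
  · rw [if_neg h]; ring

lemma comm_zm (n : ℕ) : Jz n * Jm n - Jm n * Jz n = -(Jm n) := by
  ext a b
  simp only [Jz, Matrix.sub_apply, diagonal_mul, mul_diagonal, Jm_apply, Matrix.neg_apply]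
  by_cases h : (b:ℕ) + 1 = (a:ℕ)
  · rw [if_pos h]
    have : ((a:ℕ):ℂ) = ((b:ℕ):ℂ) + 1 := by exact_mod_cast congrArg (Nat.cast : ℕ → ℂ) h.symm
    rw [this]; ring
  · rw [if_neg h]; ring

lemma casimir (n : ℕ) :
    Jx n * Jx n + Jy n * Jy n + Jz n * Jz n = (((n:ℂ)/2) * ((n:ℂ)/2 + 1)) • 1 := by
  have hI : (1/(2 * Complex.I)) * (1/(2 * Complex.I)) = -(1/4) := by
    have h : Complex.I * Complex.I = -1 := Complex.I_mul_I
    field_simp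
    linear_combination (4:ℂ) * h
  have h2 : (1/2 : ℂ) * (1/2) = 1/4 := by norm_num
  have e1 : (Jp n + Jm n) * (Jp n + Jm n)
      = Jp n * Jp n + (Jp n * Jm n + Jm n * Jp n) + Jm n * Jm n := by noncomm_ring
  have e2 : (Jp n - Jm n) * (Jp n - Jm n)
      = Jp n * Jp n - (Jp n * Jm n + Jm n * Jp n) + Jm n * Jm n := by noncomm_ring
  have hxy : Jx n * Jx n + Jy n * Jy n
      = (1/2 : ℂ) • (Jp n * Jm n + Jm n * Jp n) := by
    simp only [Jx, Jy, smul_mul_smul_comm, hI, h2, e1, e2]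
    generalize Jp n * Jp n = A
    generalize Jp n * Jm n + Jm n * Jp n = B
    generalize Jm n * Jm n = D
    module
  rw [hxy, JpJm, JmJp]
  ext a b
  simp only [Jz, diagonal_mul_diagonal, ← diagonal_add, ← diagonal_smul,
    diagonal_apply, Matrix.smul_apply, smul_ite, smul_eq_mul, smul_zero, Matrix.add_apply,
    Matrix.smul_apply, Matrix.one_apply]
  split_ifs <;> [skip; simp] <;> push_cast <;> ring

abbrev V (n : ℕ) := Matrix (Fin (n+1)) (Fin (n+1)) ℂ

/-- commutator with a fixed matrix, as a linear endomorphism -/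
def ad (n : ℕ) (A : V n) : Module.End ℂ (V n) :=
  LinearMap.mulLeft ℂ A - LinearMap.mulRight ℂ A

lemma ad_apply (n : ℕ) (A X : V n) : ad n A X = A * X - X * A := by
  simp [ad, LinearMap.mulLeft_apply, LinearMap.mulRight_apply]

lemma ad_comm (n : ℕ) (A B : V n) :
    ad n A * ad n B - ad n B * ad n A = ad n (A * B - B * A) := by
  ext X : 1
  rw [LinearMap.sub_apply, Module.End.mul_apply, Module.End.mul_apply,
    ad_apply, ad_apply, ad_apply, ad_apply, ad_apply]
  noncomm_ring

def Hop (n : ℕ) : Module.End ℂ (V n) := ad n (Jz n)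
def Eop (n : ℕ) : Module.End ℂ (V n) := ad n (Jp n)
def Fop (n : ℕ) : Module.End ℂ (V n) := ad n (Jm n)
/-- the adjoint Casimir -/
def Cop (n : ℕ) : Module.End ℂ (V n) :=
  ad n (Jx n) ^ 2 + ad n (Jy n) ^ 2 + ad n (Jz n) ^ 2

lemma ad_smul (n : ℕ) (c : ℂ) (A : V n) : ad n (c • A) = c • ad n A := by
  ext X : 1
  rw [LinearMap.smul_apply, ad_apply, ad_apply, smul_mul_assoc, mul_smul_comm, smul_sub]

lemma ad_add (n : ℕ) (A B : V n) : ad n (A + B) = ad n A + ad n B := by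
  ext X : 1
  rw [LinearMap.add_apply, ad_apply, ad_apply, ad_apply, add_mul, mul_add]
  abel

lemma ad_sub (n : ℕ) (A B : V n) : ad n (A - B) = ad n A - ad n B := by
  ext X : 1
  rw [LinearMap.sub_apply, ad_apply, ad_apply, ad_apply, sub_mul, mul_sub]
  abel

lemma ad_neg (n : ℕ) (A : V n) : ad n (-A) = -(ad n A) := by
  ext X : 1
  rw [LinearMap.neg_apply, ad_apply, ad_apply, neg_mul, mul_neg]
  abel

lemma EF_comm (n : ℕ) : Eop n * Fop n - Fop n * Eop n = (2:ℂ) • Hop n := by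
  rw [Eop, Fop, Hop, ad_comm, comm_pm, ad_smul]

lemma HE_comm (n : ℕ) : Hop n * Eop n - Eop n * Hop n = Eop n := by
  rw [Hop, Eop, ad_comm, comm_zp]

lemma HF_comm (n : ℕ) : Hop n * Fop n - Fop n * Hop n = -(Fop n) := by
  rw [Hop, Fop, ad_comm, comm_zm, ad_neg]

lemma hEF (n : ℕ) : Eop n * Fop n = Fop n * Eop n + (2:ℂ) • Hop n := by
  rw [← EF_comm n]; abel

lemma hHF (n : ℕ) : Hop n * Fop n = Fop n * Hop n - Fop n := by
  have h := HF_comm n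
  rw [sub_eq_iff_eq_add] at h
  rw [h]; abel

lemma hHE (n : ℕ) : Hop n * Eop n = Eop n * Hop n + Eop n := by
  have h := HE_comm n
  rw [sub_eq_iff_eq_add] at h
  rw [h]; abel

lemma sq_add {R : Type*} [Ring R] (a b : R) :
    (a + b) * (a + b) = a*a + (a*b + b*a) + b*b := by noncomm_ring

lemma sq_sub' {R : Type*} [Ring R] (a b : R) :
    (a - b) * (a - b) = a*a - (a*b + b*a) + b*b := by noncomm_ring

lemma Cop_eq (n : ℕ) : Cop n = Hop n ^ 2 + Hop n + Fop n * Eop n := by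
  have hI : (1/(2 * Complex.I)) * (1/(2 * Complex.I)) = -(1/4) := by
    have h : Complex.I * Complex.I = -1 := Complex.I_mul_I
    field_simp
    linear_combination (4:ℂ) * h
  have h2 : (1/2 : ℂ) * (1/2) = 1/4 := by norm_num
  have hx : ad n (Jx n) = (1/2 : ℂ) • (Eop n + Fop n) := by
    rw [Jx, ad_smul, ad_add, Eop, Fop]
  have hy : ad n (Jy n) = (1/(2 * Complex.I)) • (Eop n - Fop n) := by
    rw [Jy, ad_smul, ad_sub, Eop, Fop]
  have hz : ad n (Jz n) = Hop n := rfl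
  rw [Cop, hx, hy, hz]
  rw [sq, sq, smul_mul_smul_comm, smul_mul_smul_comm, hI, h2,
    sq_add, sq_sub', hEF n]
  generalize Eop n * Eop n = A
  generalize Fop n * Eop n = B
  generalize Fop n * Fop n = D
  rw [sq]
  generalize Hop n * Hop n = H2
  module

lemma CF_comm (n : ℕ) : Cop n * Fop n = Fop n * Cop n := by
  have c1 : (Hop n * Hop n) * Fop n
      = Fop n * (Hop n * Hop n) - Fop n * Hop n - Fop n * Hop n + Fop n := by
    calc (Hop n * Hop n) * Fop n = Hop n * (Hop n * Fop n) := by rw [mul_assoc]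
    _ = Hop n * (Fop n * Hop n - Fop n) := by rw [hHF]
    _ = (Hop n * Fop n) * Hop n - Hop n * Fop n := by rw [mul_sub, ← mul_assoc]
    _ = (Fop n * Hop n - Fop n) * Hop n - (Fop n * Hop n - Fop n) := by rw [hHF]
    _ = Fop n * (Hop n * Hop n) - Fop n * Hop n - Fop n * Hop n + Fop n := by
        rw [sub_mul, mul_assoc]; abel
  have c3 : (Fop n * Eop n) * Fop n
      = Fop n * (Fop n * Eop n) + (2:ℂ) • (Fop n * Hop n) := by
    rw [mul_assoc, hEF, mul_add, mul_smul_comm]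
  rw [Cop_eq, sq]
  rw [add_mul, add_mul, mul_add, mul_add, c1, c3, hHF]
  module

def K (n : ℕ) : ℂ := ((n:ℂ)/2) * ((n:ℂ)/2 + 1)

lemma K_ne (n : ℕ) (hn : 1 ≤ n) : K n ≠ 0 := by
  have h1 : ((n:ℂ)) ≠ 0 := by
    exact_mod_cast Nat.cast_ne_zero.mpr (by omega)
  have h2 : ((n:ℂ)/2 + 1) ≠ 0 := by
    intro h
    have : (n:ℂ) = -2 := by linear_combination 2*h
    rw [this] at h1
    have : ((n:ℝ)) = -2 := by exact_mod_cast this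
    nlinarith [Nat.cast_nonneg (α := ℝ) n]
  exact mul_ne_zero (by simpa using div_ne_zero h1 two_ne_zero) h2

lemma LS_eq (n : ℕ) (hn : 1 ≤ n) (X : V n) :
    LS n X = X - (2 * K n)⁻¹ • Cop n X := by
  have key : ∀ A : V n, ad n A (ad n A X)
      = A*A*X - (A*X*A + A*X*A) + X*(A*A) := by
    intro A
    rw [ad_apply, ad_apply]
    noncomm_ring
  have h1 : (Jx n*Jx n)*X + ((Jy n*Jy n)*X + (Jz n*Jz n)*X) = K n • X := by
    rw [← add_mul, ← add_mul, ← add_assoc, casimir, smul_mul_assoc, one_mul, K]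
  have h2 : X*(Jx n*Jx n) + (X*(Jy n*Jy n) + X*(Jz n*Jz n)) = K n • X := by
    rw [← mul_add, ← mul_add, ← add_assoc, casimir, mul_smul_comm, mul_one, K]
  have hC : Cop n X = (Jx n*Jx n*X + (Jy n*Jy n*X + Jz n*Jz n*X))
      + (X*(Jx n*Jx n) + (X*(Jy n*Jy n) + X*(Jz n*Jz n)))
      - ((Jx n*X*Jx n + Jy n*X*Jy n + Jz n*X*Jz n)
         + (Jx n*X*Jx n + Jy n*X*Jy n + Jz n*X*Jz n)) := by
    have : Cop n X = ad n (Jx n) (ad n (Jx n) X) + ad n (Jy n) (ad n (Jy n) X)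
        + ad n (Jz n) (ad n (Jz n) X) := by
      simp [Cop, sq, LinearMap.add_apply, Module.End.mul_apply]
    rw [this, key, key, key]
    abel
  have hsum : Jx n*X*Jx n + Jy n*X*Jy n + Jz n*X*Jz n
      = K n • X - (2:ℂ)⁻¹ • Cop n X := by
    rw [hC, h1, h2]
    module
  rw [LS, hsum, ← K]
  rw [smul_sub, smul_smul, smul_smul]
  have hK := K_ne n hn
  rw [inv_mul_cancel₀ hK, one_smul]
  congr 1
  rw [mul_inv, mul_comm]

/-- coefficients of the highest weight vector of weight `m` -/
def xc (n m : ℕ) (a : ℕ) : ℂ := ∏ i ∈ Finset.range a, (cc n (i+m) / cc n i)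

/-- highest weight vector of weight `m` -/
def hw (n m : ℕ) : V n := Matrix.of fun a b => if (a:ℕ) + m = (b:ℕ) then xc n m a else 0

lemma hw_ne_zero {n m : ℕ} (hm : m ≤ n) : hw n m ≠ 0 := by
  intro h
  have h0 : hw n m ⟨0, by omega⟩ ⟨m, by omega⟩ = 0 := by rw [h]; rfl
  rw [hw] at h0
  simp [xc] at h0

lemma H_hw (n m : ℕ) : Hop n (hw n m) = (m:ℂ) • hw n m := by
  ext a b
  rw [Hop, ad_apply]
  simp only [Jz, Matrix.sub_apply, diagonal_mul, mul_diagonal, Matrix.smul_apply, smul_eq_mul, hw,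
    Matrix.of_apply]
  by_cases h : (a:ℕ) + m = (b:ℕ)
  · rw [if_pos h]
    have : ((b:ℕ):ℂ) = ((a:ℕ):ℂ) + m := by exact_mod_cast congrArg (Nat.cast : ℕ → ℂ) h.symm
    rw [this]; ring
  · rw [if_neg h]; ring

lemma E_hw {n m : ℕ} (hm : m ≤ n) : Eop n (hw n m) = 0 := by
  ext a b
  rw [Eop, ad_apply]
  simp only [Matrix.sub_apply, Matrix.zero_apply, mul_apply, Jp_apply, hw, Matrix.of_apply,
    ite_mul, zero_mul]
  have e1 : (∑ c : Fin (n+1), if (a:ℕ) + 1 = (c:ℕ) then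
      (cc n (a:ℕ) * if (c:ℕ) + m = (b:ℕ) then xc n m c else 0) else 0)
      = if h : (a:ℕ) + 1 ≤ n then
          (cc n (a:ℕ) * if ((a:ℕ)+1) + m = (b:ℕ) then xc n m ((a:ℕ)+1) else 0) else 0 := by
    rw [sum_ite_val n ((a:ℕ)+1)]
  have e2 : (∑ c : Fin (n+1), if (a:ℕ) + m = (c:ℕ) then
      (xc n m (a:ℕ) * if (c:ℕ) + 1 = (b:ℕ) then cc n (c:ℕ) else 0) else 0)
      = if h : (a:ℕ) + m ≤ n then
          (xc n m (a:ℕ) * if ((a:ℕ)+m) + 1 = (b:ℕ) then cc n ((a:ℕ)+m) else 0) else 0 := by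
    rw [sum_ite_val n ((a:ℕ)+m)]
  rw [e1, e2]
  by_cases hb : (a:ℕ) + 1 + m = (b:ℕ)
  · -- the main cancellation
    have hble := b.isLt
    have ha1 : (a:ℕ) + 1 ≤ n := by omega
    have ham : (a:ℕ) + m ≤ n := by omega
    have hcca : cc n (a:ℕ) ≠ 0 := cc_ne_zero (by omega)
    rw [dif_pos ha1, dif_pos ham, if_pos (by omega), if_pos (by omega)]
    rw [xc, Finset.prod_range_succ, ← xc]
    field_simp
    simp
  · rw [sub_eq_zero]
    by_cases ha1 : (a:ℕ) + 1 ≤ n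
    · rw [dif_pos ha1, if_neg (by omega)]
      by_cases ham : (a:ℕ) + m ≤ n
      · rw [dif_pos ham, if_neg (by omega)]
        simp
      · rw [dif_neg ham]
        simp
    · rw [dif_neg ha1]
      by_cases ham : (a:ℕ) + m ≤ n
      · rw [dif_pos ham, if_neg (by omega)]
        simp
      · rw [dif_neg ham]

/-- the string vectors `F^k (hw m)` -/
def w (n m k : ℕ) : V n := (Fop n ^ k) (hw n m)

lemma w_zero (n m : ℕ) : w n m 0 = hw n m := by simp [w]

lemma w_succ (n m k : ℕ) : w n m (k+1) = Fop n (w n m k) := by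
  rw [w, w, pow_succ', Module.End.mul_apply]

lemma H_w (n m : ℕ) : ∀ k, Hop n (w n m k) = ((m:ℂ) - k) • w n m k := by
  intro k
  induction k with
  | zero => rw [w_zero]; simpa using H_hw n m
  | succ k ih =>
    rw [w_succ]
    have step : Hop n (Fop n (w n m k)) = Fop n (Hop n (w n m k)) - Fop n (w n m k) := by
      calc Hop n (Fop n (w n m k)) = (Hop n * Fop n) (w n m k) := rfl
      _ = (Fop n * Hop n - Fop n) (w n m k) := by rw [hHF]
      _ = Fop n (Hop n (w n m k)) - Fop n (w n m k) := rfl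
    rw [step, ih, LinearMap.map_smul]
    push_cast
    module

lemma C_w {n m : ℕ} (hm : m ≤ n) : ∀ k, Cop n (w n m k) = ((m:ℂ) * ((m:ℂ)+1)) • w n m k := by
  intro k
  induction k with
  | zero =>
    rw [w_zero, Cop_eq]
    rw [LinearMap.add_apply, LinearMap.add_apply, Module.End.mul_apply, E_hw hm, map_zero]
    rw [sq, Module.End.mul_apply, H_hw, LinearMap.map_smul, H_hw]
    rw [smul_smul]
    module
  | succ k ih =>
    rw [w_succ]
    calc Cop n (Fop n (w n m k)) = (Cop n * Fop n) (w n m k) := rfl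
    _ = (Fop n * Cop n) (w n m k) := by rw [CF_comm]
    _ = Fop n (Cop n (w n m k)) := rfl
    _ = ((m:ℂ) * ((m:ℂ)+1)) • Fop n (w n m k) := by rw [ih, LinearMap.map_smul]

lemma E_w {n m : ℕ} (hm : m ≤ n) : ∀ k,
    Eop n (w n m (k+1)) = ((((k:ℕ):ℂ)+1) * (2*(m:ℂ) - ((k:ℕ):ℂ))) • w n m k := by
  intro k
  induction k with
  | zero =>
    rw [w_succ, w_zero]
    have step : Eop n (Fop n (hw n m))
        = Fop n (Eop n (hw n m)) + (2:ℂ) • Hop n (hw n m) := by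
      calc Eop n (Fop n (hw n m)) = (Eop n * Fop n) (hw n m) := rfl
      _ = (Fop n * Eop n + (2:ℂ) • Hop n) (hw n m) := by rw [hEF]
      _ = Fop n (Eop n (hw n m)) + (2:ℂ) • Hop n (hw n m) := rfl
    rw [step, E_hw hm, map_zero, H_hw, smul_smul]
    push_cast
    module
  | succ k ih =>
    rw [w_succ]
    have step : Eop n (Fop n (w n m (k+1)))
        = Fop n (Eop n (w n m (k+1))) + (2:ℂ) • Hop n (w n m (k+1)) := by
      calc Eop n (Fop n (w n m (k+1))) = (Eop n * Fop n) (w n m (k+1)) := rfl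
      _ = (Fop n * Eop n + (2:ℂ) • Hop n) (w n m (k+1)) := by rw [hEF]
      _ = Fop n (Eop n (w n m (k+1))) + (2:ℂ) • Hop n (w n m (k+1)) := rfl
    rw [step, ih, LinearMap.map_smul, H_w, ← w_succ, smul_smul, ← add_smul]
    congr 1
    push_cast
    ring

lemma w_ne_zero {n m : ℕ} (hm : m ≤ n) : ∀ k, k ≤ 2*m → w n m k ≠ 0 := by
  intro k
  induction k with
  | zero => intro _; rw [w_zero]; exact hw_ne_zero hm
  | succ k ih =>
    intro hk h0
    have hE := E_w hm k
    rw [h0, map_zero] at hE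
    have hco : ((((k:ℕ):ℂ)+1) * (2*(m:ℂ) - ((k:ℕ):ℂ))) ≠ 0 := by
      apply mul_ne_zero
      · have : (((k:ℕ):ℂ)+1) = (((k+1:ℕ)):ℂ) := by push_cast; ring
        rw [this]
        exact Nat.cast_ne_zero.mpr (Nat.succ_ne_zero k)
      · have h2m : k < 2*m := by omega
        have hcast : (2*(m:ℂ) - ((k:ℕ):ℂ)) = ((2*m - k : ℕ) : ℂ) := by
          rw [Nat.cast_sub h2m.le]
          push_cast
          ring
        rw [hcast]
        have hne : 2*m - k ≠ 0 := by omega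
        exact Nat.cast_ne_zero.mpr hne
    rcases smul_eq_zero.mp hE.symm with h | h
    · exact hco h
    · exact ih (by omega) h

lemma mem_eigen_T_iff {n : ℕ} (hn : 1 ≤ n) (T : Module.End ℂ (V n))
    (hT : ∀ X, T X = LS n X) (μ : ℂ) (x : V n) :
    x ∈ Module.End.eigenspace T μ ↔ Cop n x = (2 * K n * (1 - μ)) • x := by
  have hc : (2 * K n) ≠ 0 := mul_ne_zero two_ne_zero (K_ne n hn)
  rw [Module.End.mem_eigenspace_iff, hT, LS_eq n hn]
  constructor
  · intro h
    have h2 : (2 * K n)⁻¹ • Cop n x = (1 - μ) • x := by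
      rw [sub_smul, one_smul, ← h]
      module
    have h3 := congrArg (fun y => (2 * K n) • y) h2
    simp only [smul_smul] at h3
    rw [mul_inv_cancel₀ hc, one_smul] at h3
    exact h3
  · intro h
    rw [h, smul_smul, ← mul_assoc, inv_mul_cancel₀ hc, one_mul, sub_smul, one_smul]
    module

lemma eigenspace_T_eq {n : ℕ} (hn : 1 ≤ n) (T : Module.End ℂ (V n))
    (hT : ∀ X, T X = LS n X) (μ : ℂ) :
    Module.End.eigenspace T μ = Module.End.eigenspace (Cop n) (2 * K n * (1 - μ)) := by
  ext x
  rw [mem_eigen_T_iff hn T hT, Module.End.mem_eigenspace_iff]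

/-! ### Assembly -/

lemma sum_odd (N : ℕ) : ∑ i ∈ Finset.range N, (2*i+1) = N*N := by
  induction N with
  | zero => simp
  | succ N ih => rw [Finset.sum_range_succ, ih]; ring

def Idx (n : ℕ) : Type := Σ m : Fin (n+1), Fin (2*(m:ℕ)+1)

instance (n : ℕ) : Fintype (Idx n) := by unfold Idx; infer_instance

lemma card_Idx (n : ℕ) : Fintype.card (Idx n) = (n+1)*(n+1) := by
  show Fintype.card (Σ m : Fin (n+1), Fin (2*(m:ℕ)+1)) = (n+1)*(n+1)
  rw [Fintype.card_sigma]
  simp only [Fintype.card_fin]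
  rw [Fin.sum_univ_eq_sum_range (fun m => 2*m+1), sum_odd]

def fam (n : ℕ) : Idx n → V n := fun i => w n (i.1:ℕ) (i.2:ℕ)

def μA (n : ℕ) : Idx n → ℂ := fun i =>
  ((i.1:ℕ):ℂ) * (((i.1:ℕ):ℂ)+1) + (((i.1:ℕ):ℂ) - ((i.2:ℕ):ℂ)) * (2*(n:ℂ)+2)⁻¹

def Aop (n : ℕ) : Module.End ℂ (V n) := Cop n + (2*(n:ℂ)+2)⁻¹ • Hop n

lemma A_fam (n : ℕ) (i : Idx n) : Aop n (fam n i) = μA n i • fam n i := by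
  have hm : ((i.1:ℕ)) ≤ n := by omega
  rw [Aop, LinearMap.add_apply, LinearMap.smul_apply, fam, C_w hm, H_w, μA, smul_smul,
    ← add_smul]
  congr 1
  ring

lemma two_n_two_ne (n : ℕ) : (2*(n:ℂ)+2) ≠ 0 := by
  have : (2*(n:ℂ)+2) = ((2*n+2 : ℕ) : ℂ) := by push_cast; ring
  rw [this]
  exact Nat.cast_ne_zero.mpr (by omega)

lemma μA_inj (n : ℕ) : Function.Injective (μA n) := by
  rintro ⟨m, k⟩ ⟨m', k'⟩ h
  simp only [μA] at h
  -- clear denominators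
  have h2 : ((m:ℕ):ℂ) * (((m:ℕ):ℂ)+1) * (2*(n:ℂ)+2) + (((m:ℕ):ℂ) - ((k:ℕ):ℂ))
      = ((m':ℕ):ℂ) * (((m':ℕ):ℂ)+1) * (2*(n:ℂ)+2) + (((m':ℕ):ℂ) - ((k':ℕ):ℂ)) := by
    have hne := two_n_two_ne n
    field_simp at h
    linear_combination h
  have h3 : ((m:ℕ):ℤ) * (((m:ℕ):ℤ)+1) * (2*(n:ℤ)+2) + (((m:ℕ):ℤ) - ((k:ℕ):ℤ))
      = ((m':ℕ):ℤ) * (((m':ℕ):ℤ)+1) * (2*(n:ℤ)+2) + (((m':ℕ):ℤ) - ((k':ℕ):ℤ)) := by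
    exact_mod_cast h2
  -- integer bounds
  have hbm : ((m:ℕ):ℤ) ≤ n := by exact_mod_cast Int.ofNat_le.mpr (by omega)
  have hbm' : ((m':ℕ):ℤ) ≤ n := by exact_mod_cast Int.ofNat_le.mpr (by omega)
  have hbk : ((k:ℕ):ℤ) ≤ 2*((m:ℕ):ℤ) := by exact_mod_cast Int.ofNat_le.mpr (by omega)
  have hbk' : ((k':ℕ):ℤ) ≤ 2*((m':ℕ):ℤ) := by exact_mod_cast Int.ofNat_le.mpr (by omega)
  have hk0 : (0:ℤ) ≤ ((k:ℕ):ℤ) := Int.ofNat_nonneg _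
  have hk0' : (0:ℤ) ≤ ((k':ℕ):ℤ) := Int.ofNat_nonneg _
  have hm0 : (0:ℤ) ≤ ((m:ℕ):ℤ) := Int.ofNat_nonneg _
  have hm0' : (0:ℤ) ≤ ((m':ℕ):ℤ) := Int.ofNat_nonneg _
  have hn0 : (0:ℤ) ≤ (n:ℤ) := Int.ofNat_nonneg _
  have key : ∀ a b a' b' : ℤ, a ≤ n → a' ≤ n → b ≤ 2*a → b' ≤ 2*a' → 0 ≤ b → 0 ≤ b' →
      0 ≤ a → 0 ≤ a' → a < a' →
      a * (a+1) * (2*(n:ℤ)+2) + (a - b) ≠ a' * (a'+1) * (2*(n:ℤ)+2) + (a' - b') := by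
    intro a b a' b' ha ha' hb hb' hb0 hb0' ha0 ha0' hlt heq
    have hp : a*(a+1) + 2 ≤ a'*(a'+1) := by nlinarith
    have hmul : (a*(a+1) + 2) * (2*(n:ℤ)+2) ≤ a'*(a'+1)*(2*(n:ℤ)+2) :=
      mul_le_mul_of_nonneg_right hp (by linarith)
    nlinarith
  have hmm : ((m:ℕ):ℤ) = ((m':ℕ):ℤ) := by
    rcases lt_trichotomy ((m:ℕ):ℤ) ((m':ℕ):ℤ) with hlt | heq | hgt
    · exact absurd h3 (key _ _ _ _ hbm hbm' hbk hbk' hk0 hk0' hm0 hm0' hlt)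
    · exact heq
    · exact absurd h3.symm (key _ _ _ _ hbm' hbm hbk' hbk hk0' hk0 hm0' hm0 hgt)
  have hmval : (m:ℕ) = (m':ℕ) := by exact_mod_cast hmm
  have hkk : (k:ℕ) = (k':ℕ) := by
    have : ((k:ℕ):ℤ) = ((k':ℕ):ℤ) := by rw [hmm] at h3; linarith
    exact_mod_cast this
  have hmfin : m = m' := Fin.ext hmval
  subst hmfin
  have : k = k' := Fin.ext hkk
  subst this
  rfl

lemma fam_eigvec (n : ℕ) (i : Idx n) : (Aop n).HasEigenvector (μA n i) (fam n i) := by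
  constructor
  · exact Module.End.mem_eigenspace_iff.mpr (A_fam n i)
  · exact w_ne_zero (by omega : ((i.1:ℕ)) ≤ n) (i.2:ℕ) (by omega)

lemma fam_li (n : ℕ) : LinearIndependent ℂ (fam n) :=
  (Aop n).eigenvectors_linearIndependent' (μA n) (μA_inj n) (fam n) (fam_eigvec n)

lemma rank_V (n : ℕ) : Module.finrank ℂ (V n) = (n+1)*(n+1) := by
  rw [Module.finrank_matrix]
  simp

instance (n : ℕ) : Nonempty (Idx n) := ⟨⟨0, 0, by omega⟩⟩

def famBasis (n : ℕ) : Module.Basis (Idx n) ℂ (V n) :=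
  basisOfLinearIndependentOfCardEqFinrank (fam_li n) (by rw [card_Idx, rank_V])

lemma famBasis_eq (n : ℕ) : ⇑(famBasis n) = fam n :=
  coe_basisOfLinearIndependentOfCardEqFinrank _ _
lemma scalar_key (n L : ℕ) (hn : 1 ≤ n) (j : ℝ) (hj : j = n/2) :
    2 * K n * (1 - ((1 - (L*(L+1) : ℝ)/(2*j*(j+1)) : ℝ) : ℂ)) = ((L:ℂ) * ((L:ℂ)+1)) := by
  subst hj
  have h1 : ((n:ℂ)) ≠ 0 := Nat.cast_ne_zero.mpr (by omega)
  have h2 : ((n:ℂ)+2) ≠ 0 := by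
    have : ((n:ℂ)+2) = ((n+2 : ℕ) : ℂ) := by push_cast; ring
    rw [this]; exact Nat.cast_ne_zero.mpr (by omega)
  rw [K]
  push_cast
  field_simp
  ring

end LSAux
end


open LSAux

/-- the spectrum of the Landau–Streater map, viewed as a linear endomorphism
`T` of `M_d(ℂ)`: the eigenvalues are exactly `λ_L = 1 - L(L+1)/(2j(j+1))` for
`L = 0, …, n`; these are pairwise distinct; the eigenspace of `λ_L` has dimension `2L+1`
(so `T` is diagonalizable, `⨆ μ, eigenspace = ⊤`); in particular
`λ_n = -j/(j+1) < 0` is an eigenvalue. -/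
theorem landau_streater_spectrum (n : ℕ) (hn : 1 ≤ n) (j : ℝ) (hj : j = n / 2)
    (T : Module.End ℂ (Matrix (Fin (n+1)) (Fin (n+1)) ℂ))
    (hT : ∀ X, T X = LS n X) :
    (∀ μ : ℂ, Module.End.HasEigenvalue T μ ↔
        ∃ L : ℕ, L ≤ n ∧ μ = ((1 - (L*(L+1) : ℝ)/(2*j*(j+1)) : ℝ) : ℂ)) ∧
      (∀ L L' : ℕ, L ≤ n → L' ≤ n →
        (1 - (L*(L+1) : ℝ)/(2*j*(j+1)) : ℝ) = (1 - (L'*(L'+1) : ℝ)/(2*j*(j+1)) : ℝ) →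
          L = L') ∧
      (∀ L : ℕ, L ≤ n →
        Module.finrank ℂ
            (Module.End.eigenspace T ((1 - (L*(L+1) : ℝ)/(2*j*(j+1)) : ℝ) : ℂ)) = 2*L+1) ∧
      (⨆ μ : ℂ, Module.End.eigenspace T μ) = ⊤ ∧
      Module.End.HasEigenvalue T ((-(j/(j+1)) : ℝ) : ℂ) ∧ (-(j/(j+1)) : ℝ) < 0 := by
  classical
  have hj0 : (0:ℝ) < j := by
    rw [hj]
    have : (0:ℝ) < n := by exact_mod_cast Nat.pos_of_ne_zero (by omega)
    linarith
  have hD0 : (0:ℝ) < 2*j*(j+1) := by nlinarith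
  set lam : ℕ → ℂ := fun L => ((1 - (L*(L+1) : ℝ)/(2*j*(j+1)) : ℝ) : ℂ) with hlam
  -- eigenspace translation
  have hEq : ∀ L : ℕ, Module.End.eigenspace T (lam L)
      = Module.End.eigenspace (Cop n) ((L:ℂ) * ((L:ℂ)+1)) := by
    intro L
    rw [hlam]
    rw [eigenspace_T_eq hn T hT, scalar_key n L hn j hj]
  -- membership of string vectors
  have hmem : ∀ i : Idx n, fam n i ∈ Module.End.eigenspace T (lam (i.1:ℕ)) := by
    intro i
    rw [hEq]
    exact Module.End.mem_eigenspace_iff.mpr (C_w (by omega) (i.2:ℕ))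
  -- real-level injectivity (statement 2)
  have hreal : ∀ L L' : ℕ, L ≤ n → L' ≤ n →
      (1 - (L*(L+1) : ℝ)/(2*j*(j+1)) : ℝ) = (1 - (L'*(L'+1) : ℝ)/(2*j*(j+1)) : ℝ) →
        L = L' := by
    intro L L' _ _ he
    have hD : (2*j*(j+1)) ≠ 0 := ne_of_gt hD0
    have h1 : ((L:ℝ)*((L:ℝ)+1)) = ((L':ℝ)*((L':ℝ)+1)) := by
      field_simp at he
      linarith
    have h2 : L*(L+1) = L'*(L'+1) := by exact_mod_cast h1
    rcases lt_trichotomy L L' with hlt | heq | hgt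
    · exfalso; nlinarith
    · exact heq
    · exfalso; nlinarith
  have hlam_inj : ∀ L L' : ℕ, L ≤ n → L' ≤ n → lam L = lam L' → L = L' := by
    intro L L' hL hL' he
    simp only [hlam] at he
    exact hreal L L' hL hL' (by exact_mod_cast he)
  -- diagonalizability
  have hTop : (⨆ μ : ℂ, Module.End.eigenspace T μ) = ⊤ := by
    rw [eq_top_iff]
    intro x _
    rw [← (famBasis n).sum_repr x]
    apply Submodule.sum_mem
    intro i _
    apply Submodule.smul_mem
    have hb : famBasis n i = fam n i := congrFun (famBasis_eq n) i
    rw [hb]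
    exact Submodule.mem_iSup_of_mem (lam (i.1:ℕ)) (hmem i)
  -- eigenvalue characterization
  have hIff : ∀ μ : ℂ, Module.End.HasEigenvalue T μ ↔ ∃ L : ℕ, L ≤ n ∧ μ = lam L := by
    intro μ
    constructor
    · intro hμ
      by_contra hno
      push_neg at hno
      have htop : (⊤ : Submodule ℂ (V n)) ≤
          ⨆ (ν : ℂ) (_ : ν ≠ μ), Module.End.eigenspace T ν := by
        intro x _
        rw [← (famBasis n).sum_repr x]
        apply Submodule.sum_mem
        intro i _
        apply Submodule.smul_mem
        have hb : famBasis n i = fam n i := congrFun (famBasis_eq n) i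
        rw [hb]
        refine Submodule.mem_iSup_of_mem (lam (i.1:ℕ)) ?_
        refine Submodule.mem_iSup_of_mem ?_ (hmem i)
        exact fun he => hno ((i.1:ℕ)) (by omega) he.symm
      have hdisj := (Module.End.eigenspaces_iSupIndep T) μ
      have hbot : Module.End.eigenspace T μ = ⊥ :=
        disjoint_self.mp (hdisj.mono_right (le_trans le_top htop))
      exact (Module.End.hasEigenvalue_iff.mp hμ) hbot
    · rintro ⟨L, hL, rfl⟩
      apply Module.End.hasEigenvalue_of_hasEigenvector (x := w n L 0)
      refine ⟨?_, w_ne_zero hL 0 (by omega)⟩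
      have hm0 : w n L 0 ∈ Module.End.eigenspace (Cop n) ((L:ℂ) * ((L:ℂ)+1)) :=
        Module.End.mem_eigenspace_iff.mpr (C_w hL 0)
      exact (le_of_eq (hEq L).symm) hm0
  -- dimensions
  have hDim : ∀ L : ℕ, L ≤ n →
      Module.finrank ℂ (Module.End.eigenspace T (lam L)) = 2*L+1 := by
    intro L hL
    set emb : Fin (2*L+1) → Idx n :=
      fun k => ⟨⟨L, by omega⟩, ⟨(k:ℕ), k.isLt⟩⟩ with hembd
    have hembinj : Function.Injective emb := by
      intro k k' hkk
      exact Fin.ext (congrArg (fun i : Idx n => (i.2:ℕ)) hkk)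
    have hli2 : LinearIndependent ℂ (fam n ∘ emb) := (fam_li n).comp emb hembinj
    set SL := Submodule.span ℂ (Set.range (fam n ∘ emb)) with hSLd
    have hSrank : Module.finrank ℂ SL = 2*L+1 := by
      rw [hSLd, finrank_span_eq_card hli2, Fintype.card_fin]
    have hfam_emb : ∀ k : Fin (2*L+1), fam n (emb k) = w n L (k:ℕ) := fun _ => rfl
    have hSle : SL ≤ Module.End.eigenspace T (lam L) := by
      rw [hSLd, Submodule.span_le]
      rintro _ ⟨k, rfl⟩
      show fam n (emb k) ∈ _
      rw [hfam_emb, hEq L]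
      exact Module.End.mem_eigenspace_iff.mpr (C_w hL (k:ℕ))
    have hle2 : Module.End.eigenspace T (lam L) ≤ SL := by
      intro x hx
      have hx0 : ∑ i : Idx n, (famBasis n).repr x i • fam n i = x := by
        conv_rhs => rw [← (famBasis n).sum_repr x]
        refine Finset.sum_congr rfl fun i _ => ?_
        rw [congrFun (famBasis_eq n) i]
      set P : Idx n → Prop := fun i => (i.1:ℕ) = L with hPd
      have hsplit := Finset.sum_filter_add_sum_filter_not Finset.univ P
        (fun i => (famBasis n).repr x i • fam n i)
      set y := ∑ i ∈ Finset.univ.filter P, (famBasis n).repr x i • fam n i with hyd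
      set z := ∑ i ∈ Finset.univ.filter (fun i => ¬ P i),
        (famBasis n).repr x i • fam n i with hzd
      have hxyz : y + z = x := by rw [hyd, hzd, hsplit, hx0]
      have hy : y ∈ SL := by
        rw [hyd]
        apply Submodule.sum_mem
        intro i hi
        apply Submodule.smul_mem
        have hiL : (i.1:ℕ) = L := (Finset.mem_filter.mp hi).2
        have hfe : fam n i = (fam n ∘ emb) ⟨(i.2:ℕ), by have := i.2.isLt; omega⟩ := by
          show w n (i.1:ℕ) (i.2:ℕ) = w n L ((⟨(i.2:ℕ), _⟩ : Fin (2*L+1)):ℕ)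
          exact congrArg (fun t => w n t (i.2:ℕ)) hiL
        rw [hfe, hSLd]
        exact Submodule.subset_span ⟨_, rfl⟩
      have hz : z ∈ ⨆ (ν : ℂ) (_ : ν ≠ lam L), Module.End.eigenspace T ν := by
        rw [hzd]
        apply Submodule.sum_mem
        intro i hi
        apply Submodule.smul_mem
        have hiL : (i.1:ℕ) ≠ L := (Finset.mem_filter.mp hi).2
        refine Submodule.mem_iSup_of_mem (lam (i.1:ℕ)) ?_
        refine Submodule.mem_iSup_of_mem ?_ (hmem i)
        exact fun he => hiL (hlam_inj _ _ (by omega) hL he)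
      have hzE : z ∈ Module.End.eigenspace T (lam L) := by
        have : z = x - y := by rw [← hxyz]; abel
        rw [this]
        exact Submodule.sub_mem _ hx (hSle hy)
      have hz0 : z = 0 :=
        Submodule.disjoint_def.mp ((Module.End.eigenspaces_iSupIndep T) (lam L)) z hzE hz
      have : x = y := by rw [← hxyz, hz0, add_zero]
      rw [this]
      exact hy
    rw [le_antisymm hle2 hSle, hSrank]
  refine ⟨hIff, hreal, hDim, hTop, ?_, ?_⟩
  · have hval : ((-(j/(j+1)) : ℝ) : ℂ) = lam n := by
      rw [hlam]
      congr 1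
      have hj1 : j + 1 ≠ 0 := by linarith
      have hD : (2*j*(j+1)) ≠ 0 := ne_of_gt hD0
      rw [hj]
      have hj1' : (n:ℝ)/2 + 1 ≠ 0 := by rw [← hj]; exact hj1
      field_simp
      ring
    rw [hval]
    exact (hIff (lam n)).mpr ⟨n, le_refl n, rfl⟩
  · have : (0:ℝ) < j/(j+1) := div_pos hj0 (by linarith)
    linarith
end

section
/- Let k = (k₁,k₂,k₃) ∈ ℝ³ be a unit vector (k₁²+k₂²+k₃² = 1). Then the Hermitian matrix k₁J_x + k₂J_y + k₃J_z ∈ M_d(ℂ) has eigenvalues (counted with multiplicity) exactly { j, j−1, …, −j }, i.e. the same spectrum as J_z. -/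
open Matrix Complex

noncomputable section
def csq (n a : ℕ) : ℝ := Real.sqrt ((a + 1) * ((n : ℝ) - a))

lemma Jp_apply (n : ℕ) (a b : Fin (n+1)) :
    Jp n a b = if (a : ℕ) + 1 = (b : ℕ) then (csq n a : ℂ) else 0 := rfl

lemma Jm_apply (n : ℕ) (a b : Fin (n+1)) :
    Jm n a b = if (b : ℕ) + 1 = (a : ℕ) then (csq n b : ℂ) else 0 := by
  simp only [Jm, conjTranspose_apply, Jp_apply]
  split <;> simp [Complex.conj_ofReal]

lemma csq_mul_self (n a : ℕ) (h : a ≤ n) :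
    (csq n a : ℝ) * csq n a = (a + 1) * ((n : ℝ) - a) := by
  apply Real.mul_self_sqrt
  have : (a : ℝ) ≤ n := by exact_mod_cast h
  exact mul_nonneg (by positivity) (sub_nonneg.2 this)

lemma sum_ite_succ (n : ℕ) (a : Fin (n+1)) (f : Fin (n+1) → ℂ) :
    (∑ k : Fin (n+1), if (a : ℕ) + 1 = (k : ℕ) then f k else 0) =
      if h : (a : ℕ) < n then f ⟨(a : ℕ) + 1, by omega⟩ else 0 := by
  split
  · next h =>
    rw [Finset.sum_eq_single (⟨(a : ℕ) + 1, by omega⟩ : Fin (n+1))]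
    · simp
    · intro k _ hk
      rw [if_neg]
      intro hc
      exact hk (by ext; simp [← hc])
    · simp
  · next h =>
    apply Finset.sum_eq_zero
    intro k _
    rw [if_neg]
    intro hc
    have := k.isLt
    omega

lemma sum_ite_pred (n : ℕ) (b : Fin (n+1)) (f : Fin (n+1) → ℂ) :
    (∑ k : Fin (n+1), if (k : ℕ) + 1 = (b : ℕ) then f k else 0) =
      if h : 0 < (b : ℕ) then f ⟨(b : ℕ) - 1, by omega⟩ else 0 := by
  split
  · next h =>
    rw [Finset.sum_eq_single (⟨(b : ℕ) - 1, by omega⟩ : Fin (n+1))]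
    · rw [if_pos (by simp; omega)]
    · intro k _ hk
      rw [if_neg]
      intro hc
      exact hk (by ext; simp; omega)
    · simp
  · next h =>
    apply Finset.sum_eq_zero
    intro k _
    rw [if_neg]
    omega

end

noncomputable section

lemma JpJm (n : ℕ) : Jp n * Jm n =
    Matrix.diagonal (fun a : Fin (n+1) => ((((a:ℕ) + 1) * ((n:ℝ) - (a:ℕ)) : ℝ) : ℂ)) := by
  ext a b
  rw [mul_apply]
  simp only [Jp_apply, ite_mul, zero_mul]
  rw [sum_ite_succ n a (fun k => (csq n a : ℂ) * Jm n k b)]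
  rcases eq_or_ne a b with rfl | hab
  · rw [diagonal_apply_eq]
    split
    · next h =>
      rw [Jm_apply]
      rw [if_pos (by simp)]
      push_cast
      rw [← Complex.ofReal_mul, csq_mul_self n a (by omega)]
      push_cast; ring
    · next h =>
      have ha : (a : ℕ) = n := by have := a.isLt; omega
      rw [ha]
      push_cast
      simp
  · rw [diagonal_apply_ne _ hab]
    split
    · next h =>
      rw [Jm_apply, if_neg, mul_zero]
      simp only [Fin.val_mk]
      intro hc
      exact hab (by ext; omega)
    · rfl

lemma JmJp (n : ℕ) : Jm n * Jp n =
    Matrix.diagonal (fun a : Fin (n+1) => (((a:ℕ) * ((n:ℝ) - (a:ℕ) + 1) : ℝ) : ℂ)) := by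
  ext a b
  rw [mul_apply]
  simp only [Jm_apply, ite_mul, zero_mul]
  rw [sum_ite_pred n a (fun k => (csq n k : ℂ) * Jp n k b)]
  rcases eq_or_ne a b with rfl | hab
  · rw [diagonal_apply_eq]
    split
    · next h =>
      rw [Jp_apply, if_pos (by simp; omega)]
      simp only [Fin.val_mk]
      rw [← Complex.ofReal_mul, csq_mul_self n ((a:ℕ)-1) (by have := a.isLt; omega)]
      have h1 : (((a:ℕ) - 1 : ℕ) : ℝ) = (a:ℕ) - 1 := by
        push_cast [Nat.cast_sub (by omega : 1 ≤ (a:ℕ))]; ring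
      rw [h1]; ring_nf
    · next h =>
      have ha : (a : ℕ) = 0 := by omega
      rw [ha]; push_cast; simp
  · rw [diagonal_apply_ne _ hab]
    split
    · next h =>
      rw [Jp_apply, if_neg, mul_zero]
      simp only [Fin.val_mk]
      intro hc
      exact hab (by ext; omega)
    · rfl

lemma comm_pm (n : ℕ) : Jp n * Jm n - Jm n * Jp n = (2 : ℂ) • Jz n := by
  rw [JpJm, JmJp]
  ext a b
  rcases eq_or_ne a b with rfl | hab
  · simp only [Matrix.sub_apply, diagonal_apply_eq, Matrix.smul_apply, Jz, smul_eq_mul]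
    push_cast
    ring
  · simp [diagonal_apply_ne _ hab, Jz, hab]

lemma comm_pz (n : ℕ) : Jp n * Jz n - Jz n * Jp n = -(Jp n) := by
  ext a b
  simp only [Jz, Matrix.sub_apply, mul_diagonal, diagonal_mul, Matrix.neg_apply, Jp_apply]
  split
  · next h =>
    have hb : ((b:ℕ) : ℂ) = (a:ℕ) + 1 := by exact_mod_cast h.symm
    rw [hb]; ring
  · ring

lemma comm_mz (n : ℕ) : Jm n * Jz n - Jz n * Jm n = Jm n := by
  ext a b
  simp only [Jz, Matrix.sub_apply, mul_diagonal, diagonal_mul, Jm_apply]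
  split
  · next h =>
    have ha : ((a:ℕ) : ℂ) = (b:ℕ) + 1 := by exact_mod_cast h.symm
    rw [ha]; ring
  · ring

end

noncomputable section

lemma hI1 : (1 / (2 * Complex.I) : ℂ) = -Complex.I / 2 := by
  field_simp
  linear_combination Complex.I_sq

lemma comm_yz (n : ℕ) : Jy n * Jz n - Jz n * Jy n = Complex.I • Jx n := by
  have e : ∀ A B C : Matrix (Fin (n+1)) (Fin (n+1)) ℂ,
      (A - B) * C - C * (A - B) = (A * C - C * A) - (B * C - C * B) := by
    intros; noncomm_ring
  rw [Jy, smul_mul_assoc, mul_smul_comm, ← smul_sub, e, comm_pz, comm_mz, Jx, smul_smul]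
  have h : -(Jp n) - Jm n = (-1 : ℂ) • (Jp n + Jm n) := by
    rw [neg_one_smul]; abel
  rw [h, smul_smul]
  congr 1
  rw [hI1]; ring

lemma comm_yx (n : ℕ) : Jy n * Jx n - Jx n * Jy n = -Complex.I • Jz n := by
  have e : ∀ A B : Matrix (Fin (n+1)) (Fin (n+1)) ℂ,
      (A - B) * (A + B) - (A + B) * (A - B) = (2:ℂ) • (A * B - B * A) := by
    intros A B
    have h2 : (A - B) * (A + B) - (A + B) * (A - B) = (A*B - B*A) + (A*B - B*A) := by
      noncomm_ring
    rw [h2, ← two_smul ℂ]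
  rw [Jy, Jx, smul_mul_assoc, mul_smul_comm, smul_mul_assoc, mul_smul_comm,
    smul_smul, smul_smul, mul_comm ((1:ℂ)/2), ← smul_sub, e, comm_pm, smul_smul, smul_smul]
  congr 1
  rw [hI1]; ring

lemma keyComm (n : ℕ) (t u : ℂ) :
    (-Complex.I • Jy n) * (t • Jz n + u • Jx n) - (t • Jz n + u • Jx n) * (-Complex.I • Jy n)
      = t • Jx n - u • Jz n := by
  have expand : (-Complex.I • Jy n) * (t • Jz n + u • Jx n)
      - (t • Jz n + u • Jx n) * (-Complex.I • Jy n)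
      = (-Complex.I * t) • (Jy n * Jz n - Jz n * Jy n)
        + (-Complex.I * u) • (Jy n * Jx n - Jx n * Jy n) := by
    simp only [smul_mul_assoc, mul_smul_comm, mul_add, add_mul, smul_smul, smul_sub, smul_add]
    rw [mul_comm t (-Complex.I), mul_comm u (-Complex.I)]
    abel
  rw [expand, comm_yz, comm_yx, smul_smul, smul_smul]
  have h1 : -Complex.I * t * Complex.I = t := by linear_combination (-t) * Complex.I_mul_I
  have h2 : -Complex.I * u * -Complex.I = -u := by linear_combination u * Complex.I_mul_I
  rw [h1, h2, neg_smul, ← sub_eq_add_neg]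

lemma Jz_herm (n : ℕ) : (Jz n).IsHermitian := by
  rw [Matrix.IsHermitian, Jz, diagonal_conjTranspose]
  apply congrArg Matrix.diagonal
  funext k
  simp [Pi.star_apply, Complex.star_def, map_sub, map_div₀]

lemma Jx_herm (n : ℕ) : (Jx n).IsHermitian := by
  rw [Matrix.IsHermitian, Jx, conjTranspose_smul, conjTranspose_add, Jm,
    conjTranspose_conjTranspose]
  rw [show (star (1/2 : ℂ)) = 1/2 by simp]
  exact congrArg _ (add_comm _ _)

lemma Jy_herm (n : ℕ) : (Jy n).IsHermitian := by
  rw [Matrix.IsHermitian, Jy, conjTranspose_smul, conjTranspose_sub, Jm,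
    conjTranspose_conjTranspose]
  rw [show (star (1/(2*Complex.I) : ℂ)) = -(1/(2*Complex.I)) by
    simp [star_div₀, Complex.star_def, Complex.conj_I]]
  rw [neg_smul, ← smul_neg, neg_sub]

end

lemma hasDerivAt_det {m : ℕ} (M : ℝ → Matrix (Fin m) (Fin m) ℂ)
    (N' : Matrix (Fin m) (Fin m) ℂ) (θ : ℝ)
    (h : ∀ i j, HasDerivAt (fun t => M t i j) (N' i j) θ) :
    HasDerivAt (fun t => (M t).det) ((Matrix.adjugate (M θ) * N').trace) θ := by
  have hprod : ∀ σ : Equiv.Perm (Fin m),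
      HasDerivAt (fun t => ∏ i, M t (σ i) i)
        (∑ i, (∏ j ∈ Finset.univ.erase i, M θ (σ j) j) • N' (σ i) i) θ :=
    fun σ => HasDerivAt.fun_finsetProd (fun i _ => h (σ i) i)
  have hdet : HasDerivAt (fun t => (M t).det)
      (∑ σ : Equiv.Perm (Fin m), ((Equiv.Perm.sign σ : ℤ) : ℂ) *
        (∑ i, (∏ j ∈ Finset.univ.erase i, M θ (σ j) j) • N' (σ i) i)) θ := by
    have e : (fun t => (M t).det) = fun t => ∑ σ : Equiv.Perm (Fin m),
        ((Equiv.Perm.sign σ : ℤ) : ℂ) * ∏ i, M t (σ i) i := by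
      funext t; exact Matrix.det_apply' (M t)
    rw [e]
    exact HasDerivAt.fun_sum (fun σ _ => (hprod σ).const_mul _)
  convert hdet using 1
  have key : ∀ i : Fin m, (∑ σ : Equiv.Perm (Fin m), ((Equiv.Perm.sign σ : ℤ) : ℂ) *
        ((∏ j ∈ Finset.univ.erase i, M θ (σ j) j) * N' (σ i) i))
      = ((Matrix.adjugate (M θ)) *ᵥ (fun r => N' r i)) i := by
    intro i
    rw [← Matrix.cramer_eq_adjugate_mulVec, Matrix.cramer_apply, Matrix.det_apply']
    apply Finset.sum_congr rfl
    intro σ _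
    congr 1
    rw [← Finset.mul_prod_erase _ _ (Finset.mem_univ i), mul_comm]
    congr 1
    · simp [Matrix.updateCol_apply]
    · apply Finset.prod_congr rfl
      intro j hj
      simp [Matrix.updateCol_apply, Finset.ne_of_mem_erase hj]
  calc (Matrix.adjugate (M θ) * N').trace
      = ∑ i : Fin m, ((Matrix.adjugate (M θ)) *ᵥ (fun r => N' r i)) i := by
        simp [Matrix.trace, Matrix.diag, Matrix.mul_apply, Matrix.mulVec, dotProduct]
    _ = ∑ i : Fin m, ∑ σ : Equiv.Perm (Fin m), ((Equiv.Perm.sign σ : ℤ) : ℂ) *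
          ((∏ j ∈ Finset.univ.erase i, M θ (σ j) j) * N' (σ i) i) := by
        simp_rw [key]
    _ = ∑ σ : Equiv.Perm (Fin m), ((Equiv.Perm.sign σ : ℤ) : ℂ) *
        (∑ i, (∏ j ∈ Finset.univ.erase i, M θ (σ j) j) • N' (σ i) i) := by
        rw [Finset.sum_comm]
        apply Finset.sum_congr rfl
        intro σ _
        rw [Finset.mul_sum]
        apply Finset.sum_congr rfl
        intro i _
        rw [smul_eq_mul, ← mul_assoc]

lemma trace_adj_comm {m : ℕ} (N G : Matrix (Fin m) (Fin m) ℂ) :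
    (Matrix.adjugate N * (G * N - N * G)).trace = 0 := by
  rw [mul_sub, trace_sub]
  rw [show Matrix.adjugate N * (G * N) = (Matrix.adjugate N * G) * N by noncomm_ring]
  rw [Matrix.trace_mul_comm (Matrix.adjugate N * G) N]
  rw [show N * (Matrix.adjugate N * G) = (N * Matrix.adjugate N) * G by noncomm_ring]
  rw [show Matrix.adjugate N * (N * G) = (Matrix.adjugate N * N) * G by noncomm_ring]
  rw [Matrix.mul_adjugate, Matrix.adjugate_mul, sub_self]

noncomputable section

def fθ (n : ℕ) (θ : ℝ) : Matrix (Fin (n+1)) (Fin (n+1)) ℂ :=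
  ((Real.cos θ : ℝ) : ℂ) • Jz n + ((Real.sin θ : ℝ) : ℂ) • Jx n

lemma det_f_const (n : ℕ) (z : ℂ) (θ : ℝ) :
    (z • (1 : Matrix (Fin (n+1)) (Fin (n+1)) ℂ) - fθ n θ).det
      = (z • (1 : Matrix (Fin (n+1)) (Fin (n+1)) ℂ) - Jz n).det := by
  set F : ℝ → ℂ := fun t => (z • (1 : Matrix (Fin (n+1)) (Fin (n+1)) ℂ) - fθ n t).det with hF
  have hd : ∀ t : ℝ, HasDerivAt F 0 t := by
    intro t
    set N : Matrix (Fin (n+1)) (Fin (n+1)) ℂ := z • 1 - fθ n t with hN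
    set D : Matrix (Fin (n+1)) (Fin (n+1)) ℂ :=
      ((Real.sin t : ℝ) : ℂ) • Jz n - ((Real.cos t : ℝ) : ℂ) • Jx n with hD
    have hGN : (-Complex.I • Jy n) * N - N * (-Complex.I • Jy n) = D := by
      have gen : ∀ G A B : Matrix (Fin (n+1)) (Fin (n+1)) ℂ,
          G * (A - B) - (A - B) * G = (G * A - A * G) - (G * B - B * G) := by
        intros; noncomm_ring
      have hz : (-Complex.I • Jy n) * (z • 1) - (z • 1) * (-Complex.I • Jy n) = 0 := by
        simp [mul_smul_comm, smul_mul_assoc, smul_smul, mul_comm]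
      rw [hN, gen, hz, zero_sub, fθ, keyComm, hD, neg_sub]
    have hentry : ∀ i j, HasDerivAt (fun s => (z • (1 : Matrix (Fin (n+1)) (Fin (n+1)) ℂ)
        - fθ n s) i j) (D i j) t := by
      intro i j
      have hc : HasDerivAt (fun s : ℝ => ((Real.cos s : ℝ) : ℂ))
          ((-Real.sin t : ℝ) : ℂ) t := (Real.hasDerivAt_cos t).ofReal_comp
      have hs : HasDerivAt (fun s : ℝ => ((Real.sin s : ℝ) : ℂ))
          ((Real.cos t : ℝ) : ℂ) t := (Real.hasDerivAt_sin t).ofReal_comp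
      have hmain : HasDerivAt (fun s : ℝ => (z • (1 : Matrix (Fin (n+1)) (Fin (n+1)) ℂ)) i j
          - (((Real.cos s : ℝ) : ℂ) * Jz n i j + ((Real.sin s : ℝ) : ℂ) * Jx n i j))
          (-(((-Real.sin t : ℝ) : ℂ) * Jz n i j + ((Real.cos t : ℝ) : ℂ) * Jx n i j)) t :=
        ((hc.mul_const _).add (hs.mul_const _)).const_sub _
      have hval : -(((-Real.sin t : ℝ) : ℂ) * Jz n i j + ((Real.cos t : ℝ) : ℂ) * Jx n i j)
          = D i j := by
        rw [hD]
        simp only [Matrix.sub_apply, Matrix.smul_apply, smul_eq_mul]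
        push_cast
        ring
      rw [hval] at hmain
      have hfun : (fun s : ℝ => (z • (1 : Matrix (Fin (n+1)) (Fin (n+1)) ℂ) - fθ n s) i j)
          = (fun s : ℝ => (z • (1 : Matrix (Fin (n+1)) (Fin (n+1)) ℂ)) i j
            - (((Real.cos s : ℝ) : ℂ) * Jz n i j + ((Real.sin s : ℝ) : ℂ) * Jx n i j)) := by
        funext s
        simp only [fθ, Matrix.sub_apply, Matrix.add_apply, Matrix.smul_apply, smul_eq_mul]
      rw [hfun]
      exact hmain
    have hdet := hasDerivAt_det (fun s => z • 1 - fθ n s) D t hentry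
    have hzero : (Matrix.adjugate N * D).trace = 0 := by
      rw [← hGN]
      exact trace_adj_comm N (-Complex.I • Jy n)
    rw [hzero] at hdet
    exact hdet
  have hcon : F θ = F 0 :=
    is_const_of_deriv_eq_zero (fun x => (hd x).differentiableAt)
      (fun x => (hd x).deriv) θ 0
  have h0 : fθ n 0 = Jz n := by
    simp [fθ]
  rw [hF] at hcon
  simpa [h0] using hcon
end

lemma hI1' : (1 / (2 * Complex.I) : ℂ) = -Complex.I / 2 := by
  field_simp
  linear_combination Complex.I_sq

lemma zinv (k₁ k₂ s : ℝ) (hs : s ≠ 0) (hs2 : s^2 = k₁^2 + k₂^2) :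
    ((((k₁:ℂ) + Complex.I*k₂)/(s:ℂ)))⁻¹ = ((k₁:ℂ) - Complex.I*k₂)/(s:ℂ) := by
  have hsC : (s:ℂ) ≠ 0 := Complex.ofReal_ne_zero.2 hs
  have hs2C : (s:ℂ)^2 = (k₁:ℂ)^2 + (k₂:ℂ)^2 := by exact_mod_cast congrArg (Complex.ofReal) hs2
  have key : (((k₁:ℂ) + Complex.I*k₂)/(s:ℂ)) * (((k₁:ℂ) - Complex.I*k₂)/(s:ℂ)) = 1 := by
    field_simp
    linear_combination -hs2C - (k₂:ℂ)^2 * Complex.I_sq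
  exact inv_eq_of_mul_eq_one_right key

lemma phase_super (k₁ k₂ s : ℝ) (hs : s ≠ 0) (hs2 : s^2 = k₁^2 + k₂^2) (c : ℂ) :
    ((((k₁:ℂ) + Complex.I*k₂)/(s:ℂ)))⁻¹ * ((s:ℂ) * ((1/2) * c))
      = (k₁:ℂ) * ((1/2)*c) + (k₂:ℂ) * (1/(2*Complex.I) * c) := by
  have hsC : (s:ℂ) ≠ 0 := Complex.ofReal_ne_zero.2 hs
  rw [zinv k₁ k₂ s hs hs2, hI1']
  field_simp
  ring

lemma phase_sub (k₁ k₂ s : ℝ) (hs : s ≠ 0) (hs2 : s^2 = k₁^2 + k₂^2) (c : ℂ) :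
    (((k₁:ℂ) + Complex.I*k₂)/(s:ℂ)) * ((s:ℂ) * ((1/2) * c))
      = (k₁:ℂ) * ((1/2)*c) + (k₂:ℂ) * (1/(2*Complex.I) * (0 - c)) := by
  have hsC : (s:ℂ) ≠ 0 := Complex.ofReal_ne_zero.2 hs
  rw [hI1']
  field_simp
  ring

noncomputable section

lemma charpoly_eval {m : ℕ} (M : Matrix (Fin m) (Fin m) ℂ) (z : ℂ) :
    M.charpoly.eval z = (z • (1 : Matrix (Fin m) (Fin m) ℂ) - M).det := by
  rw [Matrix.charpoly, ← Polynomial.coe_evalRingHom, RingHom.map_det]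
  congr 1
  ext i j
  rcases eq_or_ne i j with rfl | h
  · simp [Matrix.charmatrix_apply_eq, Matrix.map_apply, Matrix.sub_apply,
      Matrix.smul_apply, Matrix.one_apply]
  · simp [Matrix.charmatrix_apply_ne _ _ _ h, Matrix.map_apply, Matrix.sub_apply,
      Matrix.smul_apply, Matrix.one_apply, h]

lemma charpoly_Jz (n : ℕ) : (Jz n).charpoly
    = ∏ i : Fin (n+1), (Polynomial.X - Polynomial.C ((n:ℂ)/2 - (i:ℕ))) := by
  rw [Matrix.charpoly]
  have h : Matrix.charmatrix (Jz n) = Matrix.diagonal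
      (fun i : Fin (n+1) => (Polynomial.X : Polynomial ℂ) - Polynomial.C ((n:ℂ)/2 - (i:ℕ))) := by
    ext i j
    rcases eq_or_ne i j with rfl | h
    · simp [Matrix.charmatrix_apply_eq, Jz]
    · simp [Matrix.charmatrix_apply_ne _ _ _ h, Jz, Matrix.diagonal_apply_ne _ h, h]
  rw [h, Matrix.det_diagonal]

end

noncomputable section

lemma zmul (k₁ k₂ s : ℝ) (hs : s ≠ 0) (hs2 : s^2 = k₁^2 + k₂^2) :
    (((k₁:ℂ) + Complex.I*k₂)/(s:ℂ)) * (((k₁:ℂ) - Complex.I*k₂)/(s:ℂ)) = 1 := by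
  have hsC : (s:ℂ) ≠ 0 := Complex.ofReal_ne_zero.2 hs
  have hs2C : (s:ℂ)^2 = (k₁:ℂ)^2 + (k₂:ℂ)^2 := by exact_mod_cast congrArg (Complex.ofReal) hs2
  field_simp
  linear_combination -hs2C - (k₂:ℂ)^2 * Complex.I_sq

lemma phase_sim (n : ℕ) (k₁ k₂ k₃ s : ℝ) (hs : s ≠ 0) (hs2 : s ^ 2 = k₁^2 + k₂^2) :
    Matrix.diagonal (fun a : Fin (n+1) => (((k₁:ℂ) + Complex.I*k₂)/(s:ℂ)) ^ (a:ℕ))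
      * ((k₃:ℂ) • Jz n + (s:ℂ) • Jx n)
      * Matrix.diagonal (fun a : Fin (n+1) => ((((k₁:ℂ) + Complex.I*k₂)/(s:ℂ))⁻¹) ^ (a:ℕ))
    = (k₁:ℂ) • Jx n + (k₂:ℂ) • Jy n + (k₃:ℂ) • Jz n := by
  set z₀ : ℂ := (((k₁:ℂ) + Complex.I*k₂)/(s:ℂ)) with hz₀def
  have hz₀ : z₀ ≠ 0 := left_ne_zero_of_mul_eq_one (zmul k₁ k₂ s hs hs2)
  ext a b
  rw [Matrix.mul_diagonal, Matrix.diagonal_mul]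
  have hp : ∀ m : ℕ, z₀ ^ m * (z₀⁻¹) ^ m = 1 := by
    intro m
    rw [← mul_pow, mul_inv_cancel₀ hz₀, one_pow]
  simp only [Matrix.add_apply, Matrix.smul_apply, Jx, Jy, Matrix.smul_apply, Matrix.sub_apply,
    Matrix.add_apply, Jp_apply, Jm_apply, Jz, Matrix.diagonal_apply, smul_eq_mul]
  by_cases h1 : (a:ℕ) + 1 = (b:ℕ)
  · have hab : ¬ (a = b) := by intro h; subst h; omega
    have hba : ¬ ((b:ℕ) + 1 = (a:ℕ)) := by omega
    rw [if_pos h1, if_neg hba, if_neg hab, ← h1, pow_succ]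
    have hps := phase_super k₁ k₂ s hs hs2 ((csq n a : ℝ) : ℂ)
    calc z₀ ^ (a:ℕ) * ((k₃:ℂ) * 0 + (s:ℂ) * (1/2 * ((csq n a : ℝ) + 0)))
          * ((z₀⁻¹) ^ (a:ℕ) * z₀⁻¹)
        = (z₀ ^ (a:ℕ) * (z₀⁻¹) ^ (a:ℕ))
            * (z₀⁻¹ * ((s:ℂ) * (1/2 * ((csq n a : ℝ))))) := by ring
      _ = z₀⁻¹ * ((s:ℂ) * (1/2 * ((csq n a : ℝ)))) := by rw [hp, one_mul]
      _ = (k₁:ℂ) * (1/2 * ((csq n a : ℝ) + 0))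
            + (k₂:ℂ) * (1/(2*Complex.I) * ((csq n a : ℝ) - 0)) + (k₃:ℂ) * 0 := by
          linear_combination hps
  · by_cases h2 : (b:ℕ) + 1 = (a:ℕ)
    · have hab : ¬ (a = b) := by intro h; subst h; omega
      rw [if_neg h1, if_pos h2, if_neg hab, ← h2, pow_succ]
      have hpsub := phase_sub k₁ k₂ s hs hs2 ((csq n b : ℝ) : ℂ)
      calc z₀ ^ (b:ℕ) * z₀ * ((k₃:ℂ) * 0 + (s:ℂ) * (1/2 * (0 + (csq n b : ℝ))))
            * ((z₀⁻¹) ^ (b:ℕ))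
          = (z₀ ^ (b:ℕ) * (z₀⁻¹) ^ (b:ℕ))
              * (z₀ * ((s:ℂ) * (1/2 * ((csq n b : ℝ))))) := by ring
        _ = z₀ * ((s:ℂ) * (1/2 * ((csq n b : ℝ)))) := by rw [hp, one_mul]
        _ = (k₁:ℂ) * (1/2 * (0 + (csq n b : ℝ)))
              + (k₂:ℂ) * (1/(2*Complex.I) * (0 - (csq n b : ℝ))) + (k₃:ℂ) * 0 := by
            linear_combination hpsub
    · by_cases h3 : a = b
      · subst h3
        have hne : ¬((a:ℕ) + 1 = (a:ℕ)) := by omega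
        simp only [hne, if_false, eq_self_iff_true, if_true]
        linear_combination ((k₃:ℂ) * ((n:ℂ)/2 - ((a:ℕ):ℂ))) * hp (a:ℕ)
      · simp only [h1, h2, h3, if_false]
        ring

end

/-- for a unit vector `k = (k₁,k₂,k₃) ∈ ℝ³`, the Hermitian matrix
`k₁Jₓ + k₂J_y + k₃J_z` has eigenvalues (with multiplicity) exactly `j, j-1, …, -j`,
i.e. the same spectrum as `J_z`; encoded via the characteristic polynomial. -/
theorem spin_projection_spectrum (n : ℕ) (hn : 1 ≤ n) (k₁ k₂ k₃ : ℝ)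
    (hk : k₁ ^ 2 + k₂ ^ 2 + k₃ ^ 2 = 1) :
    ((k₁ : ℂ) • Jx n + (k₂ : ℂ) • Jy n + (k₃ : ℂ) • Jz n).IsHermitian ∧
      ((k₁ : ℂ) • Jx n + (k₂ : ℂ) • Jy n + (k₃ : ℂ) • Jz n).charpoly =
        ∏ i : Fin (n+1), (Polynomial.X - Polynomial.C ((n : ℂ)/2 - (i : ℕ))) ∧
      ((k₁ : ℂ) • Jx n + (k₂ : ℂ) • Jy n + (k₃ : ℂ) • Jz n).charpoly = (Jz n).charpoly := by
  have herm : ((k₁:ℂ) • Jx n + (k₂:ℂ) • Jy n + (k₃:ℂ) • Jz n).IsHermitian := by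
    have hx := Jx_herm n
    have hy := Jy_herm n
    have hz := Jz_herm n
    rw [Matrix.IsHermitian] at hx hy hz ⊢
    rw [conjTranspose_add, conjTranspose_add, conjTranspose_smul, conjTranspose_smul,
      conjTranspose_smul, hx, hy, hz]
    norm_num [Complex.star_def, Complex.conj_ofReal]
  set s := Real.sqrt (k₁^2 + k₂^2) with hsdef
  have hs2 : s^2 = k₁^2 + k₂^2 := Real.sq_sqrt (by positivity)
  have hdets : ∀ z : ℂ, (z • (1 : Matrix (Fin (n+1)) (Fin (n+1)) ℂ)
      - ((k₁:ℂ) • Jx n + (k₂:ℂ) • Jy n + (k₃:ℂ) • Jz n)).det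
      = (z • (1 : Matrix (Fin (n+1)) (Fin (n+1)) ℂ) - Jz n).det := by
    intro z
    have hB : ∀ w : ℂ, (w • (1 : Matrix (Fin (n+1)) (Fin (n+1)) ℂ)
        - ((k₃:ℂ) • Jz n + (s:ℂ) • Jx n)).det
        = (w • (1 : Matrix (Fin (n+1)) (Fin (n+1)) ℂ) - Jz n).det := by
      intro w
      have h1 : -1 ≤ k₃ := by nlinarith [sq_nonneg k₁, sq_nonneg k₂, sq_nonneg (k₃+1)]
      have h2 : k₃ ≤ 1 := by nlinarith [sq_nonneg k₁, sq_nonneg k₂, sq_nonneg (k₃-1)]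
      have hss : Real.sqrt (1 - k₃^2) = s := by
        rw [hsdef]; congr 1; linarith
      have hfB : fθ n (Real.arccos k₃) = (k₃:ℂ) • Jz n + (s:ℂ) • Jx n := by
        rw [fθ, Real.cos_arccos h1 h2, Real.sin_arccos, hss]
      rw [← hfB]
      exact det_f_const n w _
    by_cases hs : s = 0
    · have hk12 : k₁^2 + k₂^2 = 0 := by rw [← hs2, hs]; ring
      have hk1 : k₁ = 0 := by nlinarith [sq_nonneg k₁, sq_nonneg k₂]
      have hk2 : k₂ = 0 := by nlinarith [sq_nonneg k₁, sq_nonneg k₂]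
      have hAB : (k₁:ℂ) • Jx n + (k₂:ℂ) • Jy n + (k₃:ℂ) • Jz n
          = (k₃:ℂ) • Jz n + (s:ℂ) • Jx n := by
        rw [hk1, hk2, hs]; push_cast; simp
      rw [hAB]
      exact hB z
    · have hsim := phase_sim n k₁ k₂ k₃ s hs hs2
      set z₀ : ℂ := ((k₁:ℂ) + Complex.I*k₂)/(s:ℂ) with hz₀def
      set D := Matrix.diagonal (fun a : Fin (n+1) => z₀ ^ (a:ℕ)) with hD
      set E := Matrix.diagonal (fun a : Fin (n+1) => (z₀⁻¹) ^ (a:ℕ)) with hE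
      have hz₀ : z₀ ≠ 0 := left_ne_zero_of_mul_eq_one (zmul k₁ k₂ s hs hs2)
      have hDE : D * E = 1 := by
        rw [hD, hE, Matrix.diagonal_mul_diagonal]
        rw [show (fun a : Fin (n+1) => z₀^(a:ℕ) * (z₀⁻¹)^(a:ℕ)) = fun _ => (1:ℂ) from
          funext fun a => by rw [← mul_pow, mul_inv_cancel₀ hz₀, one_pow]]
        exact Matrix.diagonal_one
      have hone : D * (z • (1 : Matrix (Fin (n+1)) (Fin (n+1)) ℂ)) * E
          = z • (1 : Matrix (Fin (n+1)) (Fin (n+1)) ℂ) := by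
        rw [mul_smul_comm, mul_one, smul_mul_assoc, hDE]
      have hsplit : D * (z • (1 : Matrix (Fin (n+1)) (Fin (n+1)) ℂ)
            - ((k₃:ℂ) • Jz n + (s:ℂ) • Jx n)) * E
          = z • (1 : Matrix (Fin (n+1)) (Fin (n+1)) ℂ)
            - ((k₁:ℂ) • Jx n + (k₂:ℂ) • Jy n + (k₃:ℂ) • Jz n) := by
        rw [mul_sub, sub_mul, hsim, hone]
      have hdet1 : (z • (1 : Matrix (Fin (n+1)) (Fin (n+1)) ℂ)
            - ((k₁:ℂ) • Jx n + (k₂:ℂ) • Jy n + (k₃:ℂ) • Jz n)).det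
          = (z • (1 : Matrix (Fin (n+1)) (Fin (n+1)) ℂ)
            - ((k₃:ℂ) • Jz n + (s:ℂ) • Jx n)).det := by
        rw [← hsplit, Matrix.det_mul, Matrix.det_mul]
        have hde : D.det * E.det = 1 := by rw [← Matrix.det_mul, hDE, Matrix.det_one]
        calc D.det * (z • (1 : Matrix (Fin (n+1)) (Fin (n+1)) ℂ)
              - ((k₃:ℂ) • Jz n + (s:ℂ) • Jx n)).det * E.det
            = (z • (1 : Matrix (Fin (n+1)) (Fin (n+1)) ℂ)
              - ((k₃:ℂ) • Jz n + (s:ℂ) • Jx n)).det * (D.det * E.det) := by ring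
          _ = _ := by rw [hde, mul_one]
      rw [hdet1]
      exact hB z
  have hcp : ((k₁:ℂ) • Jx n + (k₂:ℂ) • Jy n + (k₃:ℂ) • Jz n).charpoly = (Jz n).charpoly := by
    apply Polynomial.funext
    intro z
    rw [charpoly_eval, charpoly_eval, hdets z]
  exact ⟨herm, by rw [hcp, charpoly_Jz], hcp⟩
end

section
/- Let Ω ∈ M_{3d}(ℂ) be the 3×3 block matrix (with d×d blocks) Ω = (1/(j(j+1)d)) · [[J_x J_x, −J_x J_y, J_x J_z], [−J_y J_x, J_y J_y, −J_y J_z], [J_z J_x, −J_z J_y, J_z J_z]], which is the Choi matrix of the channel Φ̃ complementary to the Landau–Streater channel. Then Ω is positive semidefinite (indeed Ω = C†C/(j(j+1)d) for the block row C = [J_x, −J_y, J_z], which satisfies CC† = j(j+1)·I_d) and rank Ω = d = 2j+1. -/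
open Matrix Complex

open scoped ComplexOrder

section Aux
variable (n : ℕ)

lemma jm_apply (a b : Fin (n+1)) :
    Jm n a b = if (b : ℕ) + 1 = (a : ℕ)
      then ((Real.sqrt (((b : ℕ) + 1) * (n - (b : ℕ))) : ℝ) : ℂ) else 0 := by
  simp only [Jm, Jp, conjTranspose_apply, Matrix.of_apply, apply_ite star, star_zero,
    Complex.star_def, Complex.conj_ofReal]

lemma sqsq (k : ℕ) (hk : k ≤ n) :
    ((Real.sqrt ((k + 1) * (n - k)) : ℝ) : ℂ) * ((Real.sqrt ((k + 1) * (n - k)) : ℝ) : ℂ)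
      = ((k : ℂ) + 1) * ((n : ℂ) - (k : ℂ)) := by
  rw [← Complex.ofReal_mul, Real.mul_self_sqrt
    (mul_nonneg (by positivity) (sub_nonneg.2 (by exact_mod_cast hk)))]
  push_cast; ring

lemma jpjm : Jp n * Jm n
    = Matrix.diagonal fun k : Fin (n+1) => (((k : ℕ) : ℂ) + 1) * ((n : ℂ) - ((k : ℕ) : ℂ)) := by
  ext a b
  rw [Matrix.mul_apply]
  by_cases ha : (a : ℕ) < n
  · rw [Finset.sum_eq_single (⟨(a : ℕ) + 1, by omega⟩ : Fin (n+1))]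
    · have hval : ((⟨(a : ℕ) + 1, by omega⟩ : Fin (n+1)) : ℕ) = (a : ℕ) + 1 := rfl
      by_cases hab : a = b
      · subst hab
        rw [Matrix.diagonal_apply_eq]
        simp only [Jp, jm_apply, Matrix.of_apply, hval, if_pos rfl]
        exact sqsq n (a : ℕ) (by omega)
      · have h3 : ¬ ((b : ℕ) + 1 = (a : ℕ) + 1) := fun h => hab (Fin.ext (by omega))
        rw [Matrix.diagonal_apply_ne _ hab]
        simp only [Jp, jm_apply, Matrix.of_apply, hval, if_pos rfl, if_neg h3, mul_zero]
    · intro c _ hc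
      have : ¬ ((a : ℕ) + 1 = (c : ℕ)) := fun h => hc (Fin.ext h.symm)
      simp [Jp, this]
    · simp
  · have ha' : (a : ℕ) = n := by omega
    have h0 : ∀ c : Fin (n+1), Jp n a c * Jm n c b = 0 := by
      intro c
      have : ¬ ((a : ℕ) + 1 = (c : ℕ)) := by omega
      simp [Jp, this]
    rw [Finset.sum_congr rfl fun c _ => h0 c, Finset.sum_const_zero]
    rw [Matrix.diagonal_apply]
    split
    · rw [ha']; ring
    · rfl

lemma jmjp : Jm n * Jp n
    = Matrix.diagonal fun k : Fin (n+1) => ((k : ℕ) : ℂ) * ((n : ℂ) + 1 - ((k : ℕ) : ℂ)) := by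
  ext a b
  rw [Matrix.mul_apply]
  by_cases ha : 1 ≤ (a : ℕ)
  · rw [Finset.sum_eq_single (⟨(a : ℕ) - 1, by omega⟩ : Fin (n+1))]
    · simp only [Jp, jm_apply, Matrix.of_apply]
      have h1 : ((a : ℕ) - 1) + 1 = (a : ℕ) := by omega
      rw [if_pos h1]
      by_cases hab : a = b
      · subst hab
        rw [if_pos h1, Matrix.diagonal_apply_eq, sqsq n ((a : ℕ) - 1) (by omega)]
        have h4 : (((a : ℕ) - 1 : ℕ) : ℂ) = ((a : ℕ) : ℂ) - 1 := by
          push_cast [Nat.cast_sub ha]; ring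
        rw [h4]
        ring
      · have : ¬ (((a : ℕ) - 1) + 1 = (b : ℕ)) := by
          rw [h1]; exact fun h => hab (Fin.ext h)
        rw [if_neg this, Matrix.diagonal_apply_ne _ hab]
        ring
    · intro c _ hc
      have : ¬ ((c : ℕ) + 1 = (a : ℕ)) := by
        intro h
        apply hc; apply Fin.ext; simp; omega
      simp [jm_apply, this]
    · simp
  · have ha' : (a : ℕ) = 0 := by omega
    have h0 : ∀ c : Fin (n+1), Jm n a c * Jp n c b = 0 := by
      intro c
      have : ¬ ((c : ℕ) + 1 = (a : ℕ)) := by omega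
      simp [jm_apply, this]
    rw [Finset.sum_congr rfl fun c _ => h0 c, Finset.sum_const_zero, Matrix.diagonal_apply]
    split
    · rw [ha']; ring
    · rfl

lemma sumSq : Jx n * Jx n + Jy n * Jy n + Jz n * Jz n
    = ((n : ℂ)/2 * ((n : ℂ)/2 + 1)) • (1 : Matrix (Fin (n+1)) (Fin (n+1)) ℂ) := by
  have h2 : (1/(2*Complex.I) : ℂ) * (1/(2*Complex.I)) = -(1/4) := by
    rw [div_mul_div_comm, one_mul]
    rw [show (2*Complex.I) * (2*Complex.I) = 4 * (Complex.I * Complex.I) by ring,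
      Complex.I_mul_I]
    norm_num
  have hxy : Jx n * Jx n + Jy n * Jy n
      = (1/2 : ℂ) • (Jp n * Jm n + Jm n * Jp n) := by
    simp only [Jx, Jy, smul_mul_assoc, Matrix.mul_smul, smul_smul, mul_add, add_mul,
      mul_sub, sub_mul]
    match_scalars <;> field_simp <;> ring_nf <;> simp [Complex.I_sq] <;> ring
  rw [hxy, jpjm, jmjp, Jz, Matrix.diagonal_mul_diagonal]
  ext a b
  rcases eq_or_ne a b with rfl | hab
  · simp only [Matrix.add_apply, Matrix.smul_apply, Matrix.diagonal_apply_eq,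
      Matrix.one_apply_eq, smul_eq_mul]
    ring
  · simp [Matrix.diagonal_apply_ne _ hab, Matrix.one_apply_ne hab]

lemma hermJx : (Jx n)ᴴ = Jx n := by
  simp only [Jx, Jm, conjTranspose_smul, conjTranspose_add, conjTranspose_conjTranspose]
  rw [show (star (1/2 : ℂ)) = (1/2 : ℂ) by norm_num]
  module

lemma hermJy : (Jy n)ᴴ = Jy n := by
  simp only [Jy, Jm, conjTranspose_smul, conjTranspose_sub, conjTranspose_conjTranspose]
  have h : star (1/(2*Complex.I) : ℂ) = -(1/(2*Complex.I)) := by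
    simp [Complex.star_def, map_div₀, Complex.conj_I]
  rw [h]
  module

lemma hermJz : (Jz n)ᴴ = Jz n := by
  ext a b
  rcases eq_or_ne a b with rfl | hab
  · simp [Jz, conjTranspose_apply, Complex.star_def, map_sub, map_div₀]
  · simp [Jz, conjTranspose_apply, Matrix.diagonal_apply_ne _ hab,
      Matrix.diagonal_apply_ne _ (Ne.symm hab)]

end Aux

/-- the Choi matrix `Ω` of the complementary channel, the `3×3` block matrix
`Ω = (1/(j(j+1)d)) [[JₓJₓ, -JₓJ_y, JₓJ_z], [-J_yJₓ, J_yJ_y, -J_yJ_z],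
[J_zJₓ, -J_zJ_y, J_zJ_z]]`, satisfies `Ω = C†C/(j(j+1)d)` for the block row
`C = [Jₓ, -J_y, J_z]`, with `CC† = j(j+1)·I_d`; it is positive semidefinite of rank
`d = 2j+1`. -/
theorem choi_matrix_complementary_rank (n : ℕ) (hn : 1 ≤ n)
    (S : Fin 3 → Matrix (Fin (n+1)) (Fin (n+1)) ℂ) (hS : S = ![Jx n, -Jy n, Jz n])
    (Ω : Matrix (Fin 3 × Fin (n+1)) (Fin 3 × Fin (n+1)) ℂ)
    (hΩ : Ω = Matrix.of fun p q =>
      ((((n : ℂ)/2) * ((n : ℂ)/2 + 1) * ((n : ℂ) + 1))⁻¹) * (S p.1 * S q.1) p.2 q.2)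
    (C : Matrix (Fin (n+1)) (Fin 3 × Fin (n+1)) ℂ)
    (hC : C = Matrix.of fun a q => S q.1 a q.2) :
    Ω = ((((n : ℂ)/2) * ((n : ℂ)/2 + 1) * ((n : ℂ) + 1))⁻¹) • (Cᴴ * C) ∧
      C * Cᴴ = (((n : ℂ)/2) * ((n : ℂ)/2 + 1)) •
        (1 : Matrix (Fin (n+1)) (Fin (n+1)) ℂ) ∧
      Ω.PosSemidef ∧ Ω.rank = n + 1 := by
  have herm : ∀ α : Fin 3, (S α)ᴴ = S α := by
    intro α
    fin_cases α <;>
      simp [hS, Matrix.conjTranspose_neg, hermJx n, hermJy n, hermJz n]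
  -- scalar facts
  set c : ℂ := (((n : ℂ)/2) * ((n : ℂ)/2 + 1) * ((n : ℂ) + 1))⁻¹ with hc
  have hnpos : (0 : ℝ) < n := by
    have : (0 : ℕ) < n := by omega
    exact_mod_cast this
  have hb : ((n : ℂ)/2 * ((n : ℂ)/2 + 1) * ((n : ℂ) + 1))
      = (((n : ℝ)/2 * ((n : ℝ)/2 + 1) * ((n : ℝ) + 1) : ℝ) : ℂ) := by
    push_cast; ring
  have hrpos : (0 : ℝ) < (n : ℝ)/2 * ((n : ℝ)/2 + 1) * ((n : ℝ) + 1) := by positivity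
  have hcr : c = ((((n : ℝ)/2 * ((n : ℝ)/2 + 1) * ((n : ℝ) + 1))⁻¹ : ℝ) : ℂ) := by
    rw [hc, hb, ← Complex.ofReal_inv]
  have hcnn : 0 ≤ c := by
    rw [hcr]
    exact Complex.zero_le_real.2 (inv_nonneg.2 hrpos.le)
  have hc0 : c ≠ 0 := by
    rw [hcr]
    exact_mod_cast inv_ne_zero hrpos.ne'
  have hstarc : star c = c := by
    rw [hcr, Complex.star_def, Complex.conj_ofReal]
  -- key 1 : Ω = c • Cᴴ C
  have key1 : Ω = c • (Cᴴ * C) := by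
    rw [hΩ, hC]
    ext p q
    simp only [Matrix.of_apply, Matrix.smul_apply, Matrix.mul_apply,
      Matrix.conjTranspose_apply, smul_eq_mul]
    congr 1
    refine Finset.sum_congr rfl fun x _ => ?_
    congr 1
    rw [← Matrix.conjTranspose_apply, herm p.1]
  -- key 2 : C Cᴴ = j(j+1) • 1
  have key2 : C * Cᴴ = (((n : ℂ)/2) * ((n : ℂ)/2 + 1)) •
      (1 : Matrix (Fin (n+1)) (Fin (n+1)) ℂ) := by
    have hsum : C * Cᴴ = ∑ α : Fin 3, S α * (S α)ᴴ := by
      rw [hC]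
      ext a b
      simp only [Matrix.mul_apply, Matrix.conjTranspose_apply, Matrix.of_apply,
        Matrix.sum_apply]
      rw [Fintype.sum_prod_type]
    rw [hsum, Fin.sum_univ_three, herm 0, herm 1, herm 2, hS]
    simp only [Matrix.cons_val_zero, Matrix.cons_val_one, Matrix.head_cons,
      Matrix.cons_val_two, Matrix.tail_cons, neg_mul_neg]
    exact sumSq n
  refine ⟨key1, key2, ?_, ?_⟩
  · -- PosSemidef
    obtain ⟨h1, h2⟩ := Matrix.posSemidef_conjTranspose_mul_self C
    rw [key1]
    refine ⟨?_, fun x => ?_⟩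
    · show (c • (Cᴴ * C))ᴴ = c • (Cᴴ * C)
      rw [Matrix.conjTranspose_smul, hstarc, h1]
    · simp only [Matrix.smul_apply, smul_eq_mul]
      have e : ∀ i j (xi xj : ℂ), star xi * (c * (Cᴴ * C) i j) * xj
          = c * (star xi * (Cᴴ * C) i j * xj) := by intros; ring
      simp only [e, ← Finsupp.mul_sum]
      exact mul_nonneg hcnn (h2 x)
  · -- rank
    have hdet : IsUnit (Matrix.det (c • (1 : Matrix (Fin 3 × Fin (n+1)) (Fin 3 × Fin (n+1)) ℂ))) := by
      rw [Matrix.det_smul, Matrix.det_one, mul_one]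
      exact (pow_ne_zero _ hc0).isUnit
    have hk0 : (((n : ℂ)/2) * ((n : ℂ)/2 + 1)) ≠ 0 := by
      have : ((n : ℂ)/2 * ((n : ℂ)/2 + 1)) = (((n : ℝ)/2 * ((n : ℝ)/2 + 1) : ℝ) : ℂ) := by
        push_cast; ring
      rw [this]
      exact_mod_cast (by positivity : (0:ℝ) < (n : ℝ)/2 * ((n : ℝ)/2 + 1)).ne'
    have hunit : IsUnit ((((n : ℂ)/2) * ((n : ℂ)/2 + 1)) •
        (1 : Matrix (Fin (n+1)) (Fin (n+1)) ℂ)) := by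
      rw [Matrix.isUnit_iff_isUnit_det, Matrix.det_smul, Matrix.det_one, mul_one]
      exact (pow_ne_zero _ hk0).isUnit
    calc Ω.rank = (c • (Cᴴ * C)).rank := by rw [key1]
      _ = ((Cᴴ * C) * (c • 1)).rank := by rw [Matrix.mul_smul, mul_one]
      _ = (Cᴴ * C).rank := Matrix.rank_mul_eq_left_of_isUnit_det _ _ hdet
      _ = C.rank := Matrix.rank_conjTranspose_mul_self C
      _ = (C * Cᴴ).rank := (Matrix.rank_self_mul_conjTranspose C).symm
      _ = n + 1 := by
          rw [key2, Matrix.rank_of_isUnit _ hunit, Fintype.card_fin]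
end

section
/- Suppose n ≥ 2 (i.e. j ≥ 1). Let φ = (1/√2)(e₀ ⊗ e₀ + e_n ⊗ e_n) ∈ ℂ^d ⊗ ℂ^d (the Schmidt-rank-2 state built from |j,j⟩|j,j⟩ and |j,−j⟩|j,−j⟩), and let ρ_out = (Φ ⊗ Φ)(φφ†). Then the partial transpose of ρ_out on the second factor is not positive semidefinite (it has the negative eigenvalue −j²/(j+1)²); consequently, by the Peres–Horodecki criterion, (Φ ⊗ Φ)(φφ†) is entangled, so Φ ⊗ Φ is not entanglement annihilating and Φ is not entanglement breaking for j ≥ 1. -/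
open Matrix Complex

open Kronecker
open scoped ComplexOrder

/-- The triple `(J₁,J₂,J₃) = (Jₓ,J_y,J_z)`. -/
noncomputable def Jvec (n : ℕ) : Fin 3 → Matrix (Fin (n+1)) (Fin (n+1)) ℂ :=
  ![Jx n, Jy n, Jz n]

lemma my_mul_vecMulVec_mul {I : Type*} [Fintype I] (M N : Matrix I I ℂ) (a b : I → ℂ) :
    M * Matrix.vecMulVec a b * N = Matrix.vecMulVec (M *ᵥ a) (b ᵥ* N) := by
  ext x y
  simp only [mul_apply, vecMulVec_apply, mulVec, vecMul, dotProduct,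
    Finset.sum_mul, Finset.mul_sum]
  refine Finset.sum_congr rfl fun w _ => Finset.sum_congr rfl fun u _ => by ring

lemma my_psd_add {I : Type*} [Fintype I] {A B : Matrix I I ℂ} (hA : A.PosSemidef)
    (hB : B.PosSemidef) : (A + B).PosSemidef :=
  hA.add hB

lemma my_psd_sum {I : Type*} [Fintype I] {ι : Type*} (s : Finset ι)
    (f : ι → Matrix I I ℂ) (h : ∀ i ∈ s, (f i).PosSemidef) :
    (∑ i ∈ s, f i).PosSemidef := by
  classical
  induction s using Finset.induction_on with
  | empty => simpa using Matrix.PosSemidef.zero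
  | insert _ _ hx ih =>
    rw [Finset.sum_insert hx]
    exact my_psd_add (h _ (Finset.mem_insert_self _ _))
      (ih fun i hi => h i (Finset.mem_insert_of_mem hi))

lemma my_psd_kron {I J : Type*} [Fintype I] [Fintype J] [DecidableEq I] [DecidableEq J]
    {A : Matrix I I ℂ} {B : Matrix J J ℂ} (hA : A.PosSemidef) (hB : B.PosSemidef) :
    (A ⊗ₖ B).PosSemidef := by
  exact hA.kronecker hB

/-- for `n ≥ 2` (i.e. `j ≥ 1`), let
`φ = (1/√2)(e₀ ⊗ e₀ + e_n ⊗ e_n)` and `ρ_out = (Φ ⊗ Φ)(φφ†)`.  Then the partial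
transpose of `ρ_out` on the second factor is not positive semidefinite; consequently
(by the Peres–Horodecki criterion) `ρ_out` is entangled — it admits no separable
decomposition `ρ_out = Σᵢ Aᵢ ⊗ Bᵢ` with `Aᵢ`, `Bᵢ` positive semidefinite — so
`Φ ⊗ Φ` is not entanglement annihilating and `Φ` is not entanglement breaking. -/
theorem landau_streater_tensor_square_preserves_entanglement (n : ℕ) (hn : 2 ≤ n)
    (φ : Fin (n+1) × Fin (n+1) → ℂ)
    (hφ : φ = fun p => if p.1 = 0 ∧ p.2 = 0 then ((Real.sqrt 2 : ℂ))⁻¹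
      else if p.1 = Fin.last n ∧ p.2 = Fin.last n then ((Real.sqrt 2 : ℂ))⁻¹ else 0)
    (ρout : Matrix (Fin (n+1) × Fin (n+1)) (Fin (n+1) × Fin (n+1)) ℂ)
    (hρ : ρout = ((((n : ℂ)/2) * ((n : ℂ)/2 + 1))^2)⁻¹ •
      ∑ α : Fin 3, ∑ β : Fin 3,
        (Jvec n α ⊗ₖ Jvec n β) * Matrix.vecMulVec φ (star φ) * (Jvec n α ⊗ₖ Jvec n β)ᴴ)
    (ρΓ : Matrix (Fin (n+1) × Fin (n+1)) (Fin (n+1) × Fin (n+1)) ℂ)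
    (hΓ : ρΓ = Matrix.of fun p q => ρout (p.1, q.2) (q.1, p.2)) :
    ¬ ρΓ.PosSemidef ∧
      ¬ ∃ (N : ℕ) (A B : Fin N → Matrix (Fin (n+1)) (Fin (n+1)) ℂ),
          (∀ i, (A i).PosSemidef ∧ (B i).PosSemidef) ∧
          ρout = ∑ i, (A i) ⊗ₖ (B i) := by
  set L : Fin (n+1) := Fin.last n with hLdef
  have hLval : (L : ℕ) = n := by simp [hLdef]
  have h0L : (0 : Fin (n+1)) ≠ L := by
    simp only [Ne, Fin.ext_iff, Fin.val_zero, hLval]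
    omega
  -- entries of Jp, Jm, Jx, Jy vanish on {0, L} × {0, L}
  have hval : ∀ u : Fin (n+1), (u = 0 ∨ u = L) → (u : ℕ) = 0 ∨ (u : ℕ) = n := by
    rintro u (rfl | rfl) <;> simp [hLval]
  have hJp : ∀ u v : Fin (n+1), (u = 0 ∨ u = L) → (v = 0 ∨ v = L) → Jp n u v = 0 := by
    intro u v hu hv
    have hu' := hval u hu; have hv' := hval v hv
    simp only [Jp, Matrix.of_apply]
    rw [if_neg]
    omega
  have hJm : ∀ u v : Fin (n+1), (u = 0 ∨ u = L) → (v = 0 ∨ v = L) → Jm n u v = 0 := by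
    intro u v hu hv
    simp [Jm, Matrix.conjTranspose_apply, hJp v u hv hu]
  have hJx : ∀ u v : Fin (n+1), (u = 0 ∨ u = L) → (v = 0 ∨ v = L) → Jx n u v = 0 := by
    intro u v hu hv
    simp [Jx, Matrix.smul_apply, Matrix.add_apply, hJp u v hu hv, hJm u v hu hv]
  have hJy : ∀ u v : Fin (n+1), (u = 0 ∨ u = L) → (v = 0 ∨ v = L) → Jy n u v = 0 := by
    intro u v hu hv
    simp [Jy, Matrix.smul_apply, Matrix.sub_apply, hJp u v hu hv, hJm u v hu hv]
  have hJz00 : Jz n 0 0 = (n : ℂ)/2 := by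
    simp [Jz, Matrix.diagonal_apply_eq]
  have hJzLL : Jz n L L = (n : ℂ)/2 - n := by
    simp [Jz, Matrix.diagonal_apply_eq, hLval]
  have hJz0L : Jz n 0 L = 0 := by
    simp [Jz, Matrix.diagonal_apply_ne _ h0L]
  have hJzL0 : Jz n L 0 = 0 := by
    simp [Jz, Matrix.diagonal_apply_ne _ (Ne.symm h0L)]
  -- specialized entry facts
  have hx00 := hJx 0 0 (Or.inl rfl) (Or.inl rfl)
  have hx0L := hJx 0 L (Or.inl rfl) (Or.inr rfl)
  have hxL0 := hJx L 0 (Or.inr rfl) (Or.inl rfl)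
  have hxLL := hJx L L (Or.inr rfl) (Or.inr rfl)
  have hy00 := hJy 0 0 (Or.inl rfl) (Or.inl rfl)
  have hy0L := hJy 0 L (Or.inl rfl) (Or.inr rfl)
  have hyL0 := hJy L 0 (Or.inr rfl) (Or.inl rfl)
  have hyLL := hJy L L (Or.inr rfl) (Or.inr rfl)
  set c : ℂ := ((((n : ℂ)/2) * ((n : ℂ)/2 + 1))^2)⁻¹ with hc
  set s : ℂ := ((Real.sqrt 2 : ℝ) : ℂ) with hs
  have hs2 : s * s = 2 := by
    rw [hs, ← Complex.ofReal_mul, Real.mul_self_sqrt (by norm_num)]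
    norm_num
  have hsi : s⁻¹ * s⁻¹ = (2 : ℂ)⁻¹ := by
    rw [← mul_inv, hs2]
  have hs0 : s ≠ 0 := by
    intro h
    rw [h] at hs2
    simp at hs2
  have hab : ((0 : Fin (n+1)), (0 : Fin (n+1))) ≠ ((L, L) : Fin (n+1) × Fin (n+1)) := by
    simp [Prod.ext_iff]
    intro h
    exact absurd h h0L
  have hφ' : φ = s⁻¹ • (Pi.single ((0 : Fin (n+1)), (0 : Fin (n+1))) 1
      + Pi.single ((L, L) : Fin (n+1) × Fin (n+1)) 1) := by
    funext p
    obtain ⟨p1, p2⟩ := p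
    simp only [hφ, Pi.smul_apply, Pi.add_apply, Pi.single_apply, smul_eq_mul, Prod.mk.injEq]
    by_cases h1 : p1 = 0 ∧ p2 = 0
    · obtain ⟨rfl, rfl⟩ := h1
      simp [h0L]
    · by_cases h2 : p1 = L ∧ p2 = L
      · obtain ⟨rfl, rfl⟩ := h2
        simp [h1, Ne.symm h0L]
      · simp [h1, h2]
  have hψ : ∀ (α β : Fin 3) (x : Fin (n+1) × Fin (n+1)),
      ((Jvec n α ⊗ₖ Jvec n β) *ᵥ φ) x
        = s⁻¹ * (Jvec n α x.1 0 * Jvec n β x.2 0 + Jvec n α x.1 L * Jvec n β x.2 L) := by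
    intro α β x
    rw [hφ']
    simp [Matrix.mulVec_smul, Matrix.mulVec_add, Matrix.mulVec_single,
      Matrix.kroneckerMap_apply]
    ring
  have hent : ∀ x y, ρout x y = c * ∑ α : Fin 3, ∑ β : Fin 3,
      ((Jvec n α ⊗ₖ Jvec n β) *ᵥ φ) x * star (((Jvec n α ⊗ₖ Jvec n β) *ᵥ φ) y) := by
    intro x y
    rw [hρ]
    rw [Matrix.smul_apply, smul_eq_mul]
    congr 1
    rw [Matrix.sum_apply]
    refine Finset.sum_congr rfl fun α _ => ?_
    rw [Matrix.sum_apply]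
    refine Finset.sum_congr rfl fun β _ => ?_
    rw [my_mul_vecMulVec_mul, ← Matrix.star_mulVec, Matrix.vecMulVec_apply]
    rfl
  have hJv0 : Jvec n 0 = Jx n := rfl
  have hJv1 : Jvec n 1 = Jy n := rfl
  have hJv2 : Jvec n 2 = Jz n := rfl
  have hstarj : star ((n : ℂ)/2) = (n : ℂ)/2 := by
    simp [Complex.star_def, map_div₀]
  have hstarjn : star ((n : ℂ)/2 - n) = (n : ℂ)/2 - n := by
    simp [Complex.star_def, map_sub, map_div₀]
  have hstars : star s⁻¹ = s⁻¹ := by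
    simp [hs, map_inv₀, Complex.conj_ofReal]
  have e1 : ρout ((0 : Fin (n+1)), L) ((0 : Fin (n+1)), L) = 0 := by
    rw [hent]
    simp [Fin.sum_univ_three, hψ, hJv0, hJv1, hJv2,
      hx00, hx0L, hxL0, hxLL, hy00, hy0L, hyL0, hyLL, hJz0L, hJzL0]
  have e2 : ρout (L, (0 : Fin (n+1))) (L, (0 : Fin (n+1))) = 0 := by
    rw [hent]
    simp [Fin.sum_univ_three, hψ, hJv0, hJv1, hJv2,
      hx00, hx0L, hxL0, hxLL, hy00, hy0L, hyL0, hyLL, hJz0L, hJzL0]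
  have e3 : ρout ((0 : Fin (n+1)), (0 : Fin (n+1))) ((L, L) : Fin (n+1) × Fin (n+1))
      = c * (1/2) * (((n : ℂ)/2)^2 * ((n : ℂ)/2 - n)^2) := by
    rw [hent]
    simp only [Fin.sum_univ_three, hψ, hJv0, hJv1, hJv2]
    simp only [hx00, hx0L, hxL0, hxLL, hy00, hy0L, hyL0, hyLL, hJz00, hJz0L, hJzL0, hJzLL]
    simp only [star_mul', hstarj, hstarjn, hstars, mul_zero, zero_mul, add_zero, zero_add,
      star_zero, star_add]
    linear_combination (c * ((n : ℂ)/2) * ((n : ℂ)/2) * ((n : ℂ)/2 - n) * ((n : ℂ)/2 - n)) * hsi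
  have e4 : ρout ((L, L) : Fin (n+1) × Fin (n+1)) ((0 : Fin (n+1)), (0 : Fin (n+1)))
      = c * (1/2) * (((n : ℂ)/2)^2 * ((n : ℂ)/2 - n)^2) := by
    rw [hent]
    simp only [Fin.sum_univ_three, hψ, hJv0, hJv1, hJv2]
    simp only [hx00, hx0L, hxL0, hxLL, hy00, hy0L, hyL0, hyLL, hJz00, hJz0L, hJzL0, hJzLL]
    simp only [star_mul', hstarj, hstarjn, hstars, mul_zero, zero_mul, add_zero, zero_add,
      star_zero, star_add]
    linear_combination (c * ((n : ℂ)/2) * ((n : ℂ)/2) * ((n : ℂ)/2 - n) * ((n : ℂ)/2 - n)) * hsi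
  -- the witness vector
  set v : (Fin (n+1) × Fin (n+1)) → ℂ :=
    Pi.single ((0 : Fin (n+1)), L) 1 - Pi.single (L, (0 : Fin (n+1))) 1 with hv
  have hstarv : star v = v := by
    funext p
    simp only [hv, Pi.star_apply, Pi.sub_apply, star_sub, Pi.single_apply]
    split_ifs <;> simp
  have hQ : star v ⬝ᵥ ρΓ *ᵥ v
      = ρΓ ((0 : Fin (n+1)), L) ((0 : Fin (n+1)), L)
        - ρΓ ((0 : Fin (n+1)), L) (L, (0 : Fin (n+1)))
        - ρΓ (L, (0 : Fin (n+1))) ((0 : Fin (n+1)), L)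
        + ρΓ (L, (0 : Fin (n+1))) (L, (0 : Fin (n+1))) := by
    rw [hstarv, hv]
    simp only [Matrix.mulVec_sub, Matrix.mulVec_single_one, Matrix.col_apply, Matrix.transpose_apply, sub_dotProduct,
      single_dotProduct, Pi.sub_apply, mul_one, one_mul]
    ring
  have hQval : star v ⬝ᵥ ρΓ *ᵥ v = -(c * ((n : ℂ)/2)^4) := by
    rw [hQ, hΓ]
    simp only [Matrix.of_apply]
    rw [show ((((0 : Fin (n+1)), L).1, ((0 : Fin (n+1)), L).2) : Fin (n+1) × Fin (n+1))
      = ((0 : Fin (n+1)), L) from rfl]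
    rw [e1, e2, e3, e4]
    ring
  have hnR : (2 : ℝ) ≤ (n : ℝ) := by exact_mod_cast hn
  have hneg : ¬ (0 : ℂ) ≤ -(c * ((n : ℂ)/2)^4) := by
    have hcast : -(c * ((n : ℂ)/2)^4)
        = ((-((((((n : ℝ)/2) * ((n : ℝ)/2 + 1))^2)⁻¹ * ((n : ℝ)/2)^4)) : ℝ) : ℂ) := by
      rw [hc]
      push_cast
      ring
    rw [hcast]
    intro hcon
    rw [Complex.le_def] at hcon
    simp only [Complex.zero_re, Complex.ofReal_re] at hcon
    have h1 : (0 : ℝ) < (n : ℝ)/2 := by linarith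
    have h2 : (0 : ℝ) < ((n : ℝ)/2 * ((n : ℝ)/2 + 1))^2 :=
      pow_pos (mul_pos h1 (by linarith)) 2
    have h3 : (0 : ℝ) < (((((n : ℝ)/2) * ((n : ℝ)/2 + 1))^2)⁻¹ * ((n : ℝ)/2)^4) :=
      mul_pos (inv_pos.mpr h2) (pow_pos h1 4)
    linarith [hcon.1]
  have hnotPSD : ¬ ρΓ.PosSemidef := by
    intro hPSD
    have hge := hPSD.dotProduct_mulVec_nonneg v
    rw [hQval] at hge
    exact hneg hge
  refine ⟨hnotPSD, ?_⟩
  rintro ⟨N, A, B, hAB, hsum⟩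
  apply hnotPSD
  have hΓsum : ρΓ = ∑ i, (A i) ⊗ₖ (B i)ᵀ := by
    ext p q
    simp [hΓ, hsum, Matrix.sum_apply, Matrix.kroneckerMap_apply, Matrix.transpose_apply]
  rw [hΓsum]
  exact my_psd_sum _ _ fun i _ => my_psd_kron (hAB i).1 ((hAB i).2.transpose)
end
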